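/- arXiv:2312.00418 — 3 statements merged into one kernel-verified Lean document; each statement's English description precedes it below -/
import Mathlib

section
/- With G, G' as in the diamond-reduction construction, if G' is not isomorphic to K4 and xy was not an edge of G, then the number of diamonds in G' equals the number of diamonds in G minus one. -/
/-- A multigraph on vertex set `V`: a symmetric edge-multiplicity function with no loops. -/
structure Multigraph (V : Type*) where
  mult : V → V → ℕ
  symm : ∀ u v, mult u v = mult v u
  loopless : ∀ v, mult v v = 0

namespace Multigraph

variable {V : Type*}

/-- Adjacency: distinct vertices joined by at least one edge. -/
def Adj (G : Multigraph V) (u v : V) : Prop := u ≠ v ∧ 0 < G.mult u v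

/-- The underlying simple graph. -/
def toSimple (G : Multigraph V) : SimpleGraph V where
  Adj u v := u ≠ v ∧ 0 < G.mult u v
  symm := ⟨fun u v h => ⟨h.1.symm, by rw [G.symm v u]; exact h.2⟩⟩
  loopless := ⟨fun v h => h.1 rfl⟩

def Connected (G : Multigraph V) : Prop := G.toSimple.Connected

section Fin
variable [Fintype V] [DecidableEq V]

/-- The degree of a vertex, counting edge multiplicities. -/
def degree (G : Multigraph V) (v : V) : ℕ := ∑ u, G.mult v u

def IsCubic (G : Multigraph V) : Prop := ∀ v, G.degree v = 3

end Fin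

variable [DecidableEq V]

/-- No induced claw `K_{1,3}` (centre `c`, leaves `a b d`). -/
def IsClawFree (G : Multigraph V) : Prop :=
  ¬ ∃ c a b d : V, c ≠ a ∧ c ≠ b ∧ c ≠ d ∧ a ≠ b ∧ a ≠ d ∧ b ≠ d ∧
      G.mult c a = 1 ∧ G.mult c b = 1 ∧ G.mult c d = 1 ∧
      G.mult a b = 0 ∧ G.mult a d = 0 ∧ G.mult b d = 0

/-- An induced triangle (cycle of length three, all sides simple edges). -/
def IsTriangle (G : Multigraph V) (a b c : V) : Prop :=
  a ≠ b ∧ a ≠ c ∧ b ≠ c ∧ G.mult a b = 1 ∧ G.mult a c = 1 ∧ G.mult b c = 1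

/-- A trumpet: a triangle whose side `ab` is a multiple edge. -/
def IsTrumpet (G : Multigraph V) (a b c : V) : Prop :=
  a ≠ b ∧ a ≠ c ∧ b ≠ c ∧ G.mult a b = 2 ∧ G.mult a c = 1 ∧ G.mult b c = 1

/-- A digon: two vertices joined by parallel edges. -/
def IsDigon (G : Multigraph V) (u v : V) : Prop := u ≠ v ∧ 2 ≤ G.mult u v

/-- A diamond: an induced `K₄` minus the edge `ad`. -/
def IsDiamond (G : Multigraph V) (a b c d : V) : Prop :=
  a ≠ b ∧ a ≠ c ∧ a ≠ d ∧ b ≠ c ∧ b ≠ d ∧ c ≠ d ∧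
  G.mult a d = 0 ∧ G.mult a b = 1 ∧ G.mult a c = 1 ∧ G.mult b c = 1 ∧
  G.mult b d = 1 ∧ G.mult c d = 1

/-- The vertex sets of the diamonds of `G`. -/
def diamondSets (G : Multigraph V) : Set (Finset V) :=
  {s | ∃ a b c d, s = {a, b, c, d} ∧ G.IsDiamond a b c d}

/-- The number of diamonds of `G`. -/
noncomputable def diamondCount (G : Multigraph V) : ℕ := G.diamondSets.ncard

/-- The vertex sets of the digons of `G` that are not the multiple side of a trumpet. -/
def digonSets (G : Multigraph V) : Set (Finset V) :=
  {s | ∃ u v, s = {u, v} ∧ G.IsDigon u v ∧ ∀ w, ¬ G.IsTrumpet u v w}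

/-- The number of digons of `G` (not counting those inside trumpets). -/
noncomputable def digonCount (G : Multigraph V) : ℕ := G.digonSets.ncard

/-- `G` is (isomorphic to) the simple complete graph `K₄`. -/
def IsK4 (G : Multigraph V) : Prop :=
  Nonempty (G.toSimple ≃g (⊤ : SimpleGraph (Fin 4))) ∧ ∀ u v, G.mult u v ≤ 1

section Bisection
variable [Fintype V]

/-- A bisection: the two parts `B` and `Bᶜ` have the same size. -/
def IsBisection (G : Multigraph V) (B : Finset V) : Prop := B.card = Bᶜ.card

/-- The number of monochromatic edges inside the part `B` (with multiplicity). -/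
def monoEdges (G : Multigraph V) (B : Finset V) : ℕ :=
  (∑ u ∈ B, ∑ v ∈ B, G.mult u v) / 2

/-- The total number of monochromatic edges of the bisection `(B, Bᶜ)`. -/
def epsilon (G : Multigraph V) (B : Finset V) : ℕ := G.monoEdges B + G.monoEdges Bᶜ

/-- The simple graph induced by `G` on the part `B`. -/
def inducedSimple (G : Multigraph V) (B : Finset V) : SimpleGraph V where
  Adj u v := u ≠ v ∧ u ∈ B ∧ v ∈ B ∧ 0 < G.mult u v
  symm := ⟨fun u v h => ⟨h.1.symm, h.2.2.1, h.2.1, by rw [G.symm v u]; exact h.2.2.2⟩⟩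
  loopless := ⟨fun v h => h.1 rfl⟩

/-- Every monochromatic component inside `B` has at most `k` vertices. -/
def SmallComponents (G : Multigraph V) (B : Finset V) (k : ℕ) : Prop :=
  ∀ v ∈ B, {u | (G.inducedSimple B).Reachable v u}.ncard ≤ k

/-- A `k`-bisection. -/
def IsKBisection (G : Multigraph V) (B : Finset V) (k : ℕ) : Prop :=
  G.IsBisection B ∧ G.SmallComponents B k ∧ G.SmallComponents Bᶜ k

/-- A desired bisection: (DB1) exactly one monochromatic edge per triangle, (DB2) every
monochromatic edge lies in a triangle, (DB3) exactly one monochromatic edge per diamond,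
(DB4) no multiple edge is monochromatic. -/
def IsDesired (G : Multigraph V) (B : Finset V) : Prop :=
  G.IsBisection B ∧
  (∀ a b c, G.IsTriangle a b c →
    (({(a, b), (a, c), (b, c)} : Finset (V × V)).filter
      (fun e => e.1 ∈ B ↔ e.2 ∈ B)).card = 1) ∧
  (∀ u v, G.Adj u v → (u ∈ B ↔ v ∈ B) → ∃ w, G.IsTriangle u v w) ∧
  (∀ a b c d, G.IsDiamond a b c d →
    (({(a, b), (a, c), (b, c), (b, d), (c, d)} : Finset (V × V)).filter
      (fun e => e.1 ∈ B ↔ e.2 ∈ B)).card = 1) ∧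
  (∀ u v, 2 ≤ G.mult u v → ¬ (u ∈ B ↔ v ∈ B))

end Bisection

end Multigraph

namespace Multigraph

variable {V : Type*} [DecidableEq V]

/-- Delete all edges between `x` and `y`. -/
def deleteEdge (G : Multigraph V) (x y : V) : Multigraph V where
  mult u v := if (u = x ∧ v = y) ∨ (u = y ∧ v = x) then 0 else G.mult u v
  symm := by
    intro u v
    have hsy := G.symm u v
    by_cases h : (u = x ∧ v = y) ∨ (u = y ∧ v = x)
    · have h' : (v = x ∧ u = y) ∨ (v = y ∧ u = x) := by tauto
      simp [h, h']
    · have h' : ¬ ((v = x ∧ u = y) ∨ (v = y ∧ u = x)) := by tauto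
      simp [h, h', hsy]
  loopless := by
    intro v
    by_cases h : (v = x ∧ v = y) ∨ (v = y ∧ v = x) <;> simp [h, G.loopless]

/-- The diamond reduction: delete the diamond vertices `a b c d` and add one new edge
between the outside neighbours `x` and `y`. -/
def diamondReduce (G : Multigraph V) (a b c d x y : V) :
    Multigraph {v : V // v ∉ ({a, b, c, d} : Finset V)} where
  mult u v := if u.1 ≠ v.1 ∧ ((u.1 = x ∧ v.1 = y) ∨ (u.1 = y ∧ v.1 = x))
    then G.mult u.1 v.1 + 1 else G.mult u.1 v.1
  symm := by
    intro u v
    have hsy := G.symm u.1 v.1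
    by_cases h : u.1 ≠ v.1 ∧ ((u.1 = x ∧ v.1 = y) ∨ (u.1 = y ∧ v.1 = x))
    · have h' : v.1 ≠ u.1 ∧ ((v.1 = x ∧ u.1 = y) ∨ (v.1 = y ∧ u.1 = x)) := by tauto
      simp [h, h', hsy]
    · have h' : ¬ (v.1 ≠ u.1 ∧ ((v.1 = x ∧ u.1 = y) ∨ (v.1 = y ∧ u.1 = x))) := by tauto
      simp [h, h', hsy]
  loopless := by
    intro v
    simp [G.loopless]

/-- A ring of two diamonds: two vertex-disjoint diamonds covering all of `V`, joined
cyclically by two edges between their degree-2 vertices. -/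
def IsRingOfTwoDiamonds (G : Multigraph V) : Prop :=
  ∃ a₁ b₁ c₁ d₁ a₂ b₂ c₂ d₂ : V,
    ([a₁, b₁, c₁, d₁, a₂, b₂, c₂, d₂] : List V).Nodup ∧
    (∀ v : V, v ∈ [a₁, b₁, c₁, d₁, a₂, b₂, c₂, d₂]) ∧
    G.IsDiamond a₁ b₁ c₁ d₁ ∧ G.IsDiamond a₂ b₂ c₂ d₂ ∧
    G.mult d₁ a₂ = 1 ∧ G.mult d₂ a₁ = 1

end Multigraph

namespace Multigraph

variable {V : Type*} [DecidableEq V] [Fintype V]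

lemma third (G : Multigraph V) (hcubic : G.IsCubic) (v u1 u2 : V) (h12 : u1 ≠ u2)
    (m1 : G.mult v u1 = 1) (m2 : G.mult v u2 = 1) :
    ∃ w, w ≠ u1 ∧ w ≠ u2 ∧ w ≠ v ∧ G.mult v w = 1 ∧
      ∀ z, z ≠ u1 → z ≠ u2 → z ≠ w → G.mult v z = 0 := by
  classical
  have hdeg : ∑ u, G.mult v u = 3 := hcubic v
  set t : Finset V := (Finset.univ.erase u1).erase u2 with ht
  have hu2 : u2 ∈ Finset.univ.erase u1 :=
    Finset.mem_erase.2 ⟨h12.symm, Finset.mem_univ _⟩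
  have e1 : ∑ u ∈ t, G.mult v u + G.mult v u2 = ∑ u ∈ Finset.univ.erase u1, G.mult v u :=
    Finset.sum_erase_add _ _ hu2
  have e2 : ∑ u ∈ Finset.univ.erase u1, G.mult v u + G.mult v u1 = ∑ u, G.mult v u :=
    Finset.sum_erase_add _ _ (Finset.mem_univ u1)
  have hts : ∑ u ∈ t, G.mult v u = 1 := by omega
  have hex : ∃ w ∈ t, G.mult v w ≠ 0 := by
    by_contra h
    push_neg at h
    have : ∑ u ∈ t, G.mult v u = 0 := Finset.sum_eq_zero h
    omega
  obtain ⟨w, hwt, hw0⟩ := hex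
  have hw1 : G.mult v w = 1 := by
    have hle : G.mult v w ≤ ∑ u ∈ t, G.mult v u :=
      Finset.single_le_sum (fun i _ => Nat.zero_le _) hwt
    omega
  have hwu2 : w ≠ u2 := (Finset.mem_erase.1 hwt).1
  have hwu1 : w ≠ u1 := (Finset.mem_erase.1 (Finset.mem_erase.1 hwt).2).1
  have hwv : w ≠ v := by
    intro h
    rw [h] at hw1
    have := G.loopless v
    omega
  refine ⟨w, hwu1, hwu2, hwv, hw1, ?_⟩
  intro z hz1 hz2 hzw
  have hzt : z ∈ t := Finset.mem_erase.2 ⟨hz2, Finset.mem_erase.2 ⟨hz1, Finset.mem_univ _⟩⟩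
  have e3 : ∑ u ∈ t.erase z, G.mult v u + G.mult v z = ∑ u ∈ t, G.mult v u :=
    Finset.sum_erase_add _ _ hzt
  have hwz : w ∈ t.erase z := Finset.mem_erase.2 ⟨fun h => hzw h.symm, hwt⟩
  have hle : G.mult v w ≤ ∑ u ∈ t.erase z, G.mult v u :=
    Finset.single_le_sum (fun i _ => Nat.zero_le _) hwz
  omega

lemma pin (G : Multigraph V) (hcubic : G.IsCubic) (v u1 u2 w : V) (h12 : u1 ≠ u2)
    (hwu1 : w ≠ u1) (hwu2 : w ≠ u2)
    (m1 : G.mult v u1 = 1) (m2 : G.mult v u2 = 1) (hw : 0 < G.mult v w) :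
    G.mult v w = 1 ∧ ∀ z, z ≠ u1 → z ≠ u2 → z ≠ w → G.mult v z = 0 := by
  obtain ⟨w', h1, h2, h3, h4, h5⟩ := G.third hcubic v u1 u2 h12 m1 m2
  by_cases hww : w = w'
  · subst hww; exact ⟨h4, h5⟩
  · have := h5 w hwu1 hwu2 hww; omega

lemma satAt (G : Multigraph V) (hcubic : G.IsCubic) (v u1 u2 u3 : V)
    (h12 : u1 ≠ u2) (h13 : u1 ≠ u3) (h23 : u2 ≠ u3)
    (m1 : G.mult v u1 = 1) (m2 : G.mult v u2 = 1) (m3 : G.mult v u3 = 1) :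
    ∀ z, z ≠ u1 → z ≠ u2 → z ≠ u3 → G.mult v z = 0 :=
  (G.pin hcubic v u1 u2 u3 h12 h13.symm h23.symm m1 m2 (by omega)).2

lemma IsDiamond.swapBC {G : Multigraph V} {a b c d : V} (h : G.IsDiamond a b c d) :
    G.IsDiamond a c b d := by
  obtain ⟨h1, h2, h3, h4, h5, h6, m0, m1, m2, m3, m4, m5⟩ := h
  exact ⟨h2, h1, h3, h4.symm, h6, h5, m0, m2, m1, by rw [G.symm]; exact m3, m5, m4⟩

lemma IsDiamond.rev {G : Multigraph V} {a b c d : V} (h : G.IsDiamond a b c d) :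
    G.IsDiamond d b c a := by
  obtain ⟨h1, h2, h3, h4, h5, h6, m0, m1, m2, m3, m4, m5⟩ := h
  exact ⟨h5.symm, h6.symm, h3.symm, h4, h1.symm, h2.symm,
    by rw [G.symm]; exact m0, by rw [G.symm]; exact m4, by rw [G.symm]; exact m5,
    m3, by rw [G.symm]; exact m1, by rw [G.symm]; exact m2⟩

end Multigraph

namespace Multigraph

lemma quadBC {V : Type*} [DecidableEq V] (A B C D : V) :
    ({A, B, C, D} : Finset V) = {A, C, B, D} := by
  ext z; simp only [Finset.mem_insert, Finset.mem_singleton]; tauto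

lemma quadRev {V : Type*} [DecidableEq V] (A B C D : V) :
    ({A, B, C, D} : Finset V) = {D, B, C, A} := by
  ext z; simp only [Finset.mem_insert, Finset.mem_singleton]; tauto

lemma quadRevFull {V : Type*} [DecidableEq V] (A B C D : V) :
    ({A, B, C, D} : Finset V) = {D, C, B, A} := by
  ext z; simp only [Finset.mem_insert, Finset.mem_singleton]; tauto

end Multigraph
namespace Multigraph

variable {V : Type*} [DecidableEq V] [Fintype V]

lemma xney (G : Multigraph V) (hclaw : G.IsClawFree) (hcubic : G.IsCubic)
    (a b c d x y : V) (hdiam : G.IsDiamond a b c d)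
    (hax : G.mult a x = 1) (hdy : G.mult d y = 1)
    (hxa : x ≠ a) (hxb : x ≠ b) (hxc : x ≠ c) (hxd : x ≠ d)
    (hya : y ≠ a) (hyb : y ≠ b) (hyc : y ≠ c) (hyd : y ≠ d) : x ≠ y := by
  intro h
  obtain rfl := h
  obtain ⟨nab, nac, nad, nbc, nbd, ncd, dad, dab, dac, dbc, dbd, dcd⟩ := hdiam
  have satA : ∀ z, z ≠ b → z ≠ c → z ≠ x → G.mult a z = 0 :=
    G.satAt hcubic a b c x nbc hxb.symm hxc.symm dab dac hax
  have satB : ∀ z, z ≠ a → z ≠ c → z ≠ d → G.mult b z = 0 :=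
    G.satAt hcubic b a c d nac nad ncd (by rw [G.symm]; exact dab) dbc dbd
  have satC : ∀ z, z ≠ a → z ≠ b → z ≠ d → G.mult c z = 0 :=
    G.satAt hcubic c a b d nab nad nbd (by rw [G.symm]; exact dac)
      (by rw [G.symm]; exact dbc) dcd
  have satD : ∀ z, z ≠ b → z ≠ c → z ≠ x → G.mult d z = 0 :=
    G.satAt hcubic d b c x nbc hxb.symm hxc.symm (by rw [G.symm]; exact dbd)
      (by rw [G.symm]; exact dcd) hdy
  have mxa : G.mult x a = 1 := by rw [G.symm]; exact hax
  have mxd : G.mult x d = 1 := by rw [G.symm]; exact hdy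
  obtain ⟨z, hza, hzd, hzx, mxz, _⟩ := G.third hcubic x a d nad mxa mxd
  have hzb : z ≠ b := by
    intro h; rw [h] at mxz
    have := satB x hxa hxc hxd
    rw [G.symm] at mxz; omega
  have hzc : z ≠ c := by
    intro h; rw [h] at mxz
    have := satC x hxa hxb hxd
    rw [G.symm] at mxz; omega
  have maz : G.mult a z = 0 := satA z hzb hzc hzx
  have mdz : G.mult d z = 0 := satD z hzb hzc hzx
  exact hclaw ⟨x, a, d, z, hxa, hxd, hzx.symm, nad, hza.symm, hzd.symm,
    mxa, mxd, mxz, dad, maz, mdz⟩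

lemma coreSideX (G : Multigraph V) (hclaw : G.IsClawFree) (hcubic : G.IsCubic)
    (a b c d x : V) (hdiam : G.IsDiamond a b c d) (hax : G.mult a x = 1)
    (hxa : x ≠ a) (hxb : x ≠ b) (hxc : x ≠ c) (hxd : x ≠ d)
    (A B C D : V)
    (hAa : A ≠ a) (hAb : A ≠ b) (hAc : A ≠ c) (hAd : A ≠ d)
    (hBa : B ≠ a) (hBb : B ≠ b) (hBc : B ≠ c) (hBd : B ≠ d)
    (hCa : C ≠ a) (hCb : C ≠ b) (hCc : C ≠ c) (hCd : C ≠ d)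
    (hDa : D ≠ a) (hDb : D ≠ b) (hDc : D ≠ c) (hDd : D ≠ d)
    (hAB : A ≠ B) (hAC : A ≠ C) (hAD : A ≠ D) (hBC : B ≠ C) (hBD : B ≠ D) (hCD : C ≠ D)
    (mAB : G.mult A B = 0) (mAC : G.mult A C = 1) (mBC : G.mult B C = 1)
    (mBD : G.mult B D = 1) (mCD : G.mult C D = 1) (mAD : G.mult A D = 0)
    (hA : A = x) : False := by
  obtain rfl := hA.symm
  obtain ⟨nab, nac, nad, nbc, nbd, ncd, dad, dab, dac, dbc, dbd, dcd⟩ := hdiam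
  have mxa : G.mult x a = 1 := by rw [G.symm]; exact hax
  have satA : ∀ z, z ≠ b → z ≠ c → z ≠ x → G.mult a z = 0 :=
    G.satAt hcubic a b c x nbc hxb.symm hxc.symm dab dac hax
  have satB : ∀ z, z ≠ a → z ≠ c → z ≠ d → G.mult b z = 0 :=
    G.satAt hcubic b a c d nac nad ncd (by rw [G.symm]; exact dab) dbc dbd
  have satC : ∀ z, z ≠ a → z ≠ b → z ≠ d → G.mult c z = 0 :=
    G.satAt hcubic c a b d nab nad nbd (by rw [G.symm]; exact dac)
      (by rw [G.symm]; exact dbc) dcd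
  obtain ⟨t, hta, htC, htx, mxt, _⟩ := G.third hcubic x a C hCa.symm mxa mAC
  have htb : t ≠ b := by
    intro h; rw [h] at mxt
    have := satB x hxa hxc hxd
    rw [G.symm] at mxt; omega
  have htc : t ≠ c := by
    intro h; rw [h] at mxt
    have := satC x hxa hxb hxd
    rw [G.symm] at mxt; omega
  have htB : t ≠ B := by intro h; rw [h] at mxt; omega
  have htD : t ≠ D := by intro h; rw [h] at mxt; omega
  have maC : G.mult a C = 0 := satA C hCb hCc hAC.symm
  have mat : G.mult a t = 0 := satA t htb htc htx
  have satCC : ∀ z, z ≠ x → z ≠ B → z ≠ D → G.mult C z = 0 :=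
    G.satAt hcubic C x B D hAB hAD hBD (by rw [G.symm]; exact mAC)
      (by rw [G.symm]; exact mBC) mCD
  have mCt : G.mult C t = 0 := satCC t htx htB htD
  exact hclaw ⟨x, a, C, t, hxa, hAC, htx.symm, hCa.symm, hta.symm, htC.symm,
    mxa, mAC, mxt, maC, mat, mCt⟩

lemma coreCentralX (G : Multigraph V) (hclaw : G.IsClawFree) (hcubic : G.IsCubic)
    (a b c d x y : V) (hdiam : G.IsDiamond a b c d)
    (hax : G.mult a x = 1) (hdy : G.mult d y = 1)
    (hxa : x ≠ a) (hxb : x ≠ b) (hxc : x ≠ c) (hxd : x ≠ d)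
    (hya : y ≠ a) (hyb : y ≠ b) (hyc : y ≠ c) (hyd : y ≠ d)
    (hxy : G.mult x y = 0)
    (A B C D : V)
    (hAa : A ≠ a) (hAb : A ≠ b) (hAc : A ≠ c) (hAd : A ≠ d)
    (hDa : D ≠ a) (hDb : D ≠ b) (hDc : D ≠ c) (hDd : D ≠ d)
    (hAB : A ≠ B) (hAC : A ≠ C) (hAD : A ≠ D) (hBC : B ≠ C) (hBD : B ≠ D) (hCD : C ≠ D)
    (mBC : G.mult B C = 0) (mAB : G.mult A B = 1) (mAC : G.mult A C = 1)
    (mBD : G.mult B D = 1) (mCD : G.mult C D = 1) (mAD : G.mult A D = 0)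
    (hB : B = x) (hC : C = y) : False := by
  obtain rfl := hB.symm
  obtain rfl := hC.symm
  obtain ⟨nab, nac, nad, nbc, nbd, ncd, dad, dab, dac, dbc, dbd, dcd⟩ := hdiam
  have satA : ∀ z, z ≠ b → z ≠ c → z ≠ x → G.mult a z = 0 :=
    G.satAt hcubic a b c x nbc hxb.symm hxc.symm dab dac hax
  have satD : ∀ z, z ≠ b → z ≠ c → z ≠ y → G.mult d z = 0 :=
    G.satAt hcubic d b c y nbc hyb.symm hyc.symm (by rw [G.symm]; exact dbd)
      (by rw [G.symm]; exact dcd) hdy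
  have satX : ∀ z, z ≠ a → z ≠ A → z ≠ D → G.mult x z = 0 :=
    G.satAt hcubic x a A D hAa.symm hDa.symm hAD (by rw [G.symm]; exact hax)
      (by rw [G.symm]; exact mAB) mBD
  have satY : ∀ z, z ≠ d → z ≠ A → z ≠ D → G.mult y z = 0 :=
    G.satAt hcubic y d A D hAd.symm hDd.symm hAD (by rw [G.symm]; exact hdy)
      (by rw [G.symm]; exact mAC) mCD
  obtain ⟨r, hrx, hry, hrA, mAr, _⟩ := G.third hcubic A x y hBC mAB mAC
  have hra : r ≠ a := by
    intro h; rw [h] at mAr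
    have := satA A hAb hAc (fun h' => hAB h')
    rw [G.symm] at mAr; omega
  have hrd : r ≠ d := by
    intro h; rw [h] at mAr
    have := satD A hAb hAc (fun h' => hAC h')
    rw [G.symm] at mAr; omega
  have hrD : r ≠ D := by intro h; rw [h] at mAr; omega
  have mxr : G.mult x r = 0 := satX r hra hrA hrD
  have myr : G.mult y r = 0 := satY r hrd hrA hrD
  exact hclaw ⟨A, x, y, r, hAB, hAC, hrA.symm, hBC, hrx.symm, hry.symm,
    mAB, mAC, mAr, hxy, mxr, myr⟩

end Multigraph
namespace Multigraph

variable {V : Type*} [DecidableEq V] [Fintype V]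

lemma hitP (G : Multigraph V) (hcubic : G.IsCubic)
    (a b c d x : V) (hdiam : G.IsDiamond a b c d) (hax : G.mult a x = 1)
    (hxa : x ≠ a) (hxb : x ≠ b) (hxc : x ≠ c) (hxd : x ≠ d)
    (B C D : V) (hd2 : G.IsDiamond a B C D) :
    ({a, B, C, D} : Finset V) = {a, b, c, d} := by
  obtain ⟨nab, nac, nad, nbc, nbd, ncd, dad, dab, dac, dbc, dbd, dcd⟩ := hdiam
  have satA : ∀ z, z ≠ b → z ≠ c → z ≠ x → G.mult a z = 0 :=
    G.satAt hcubic a b c x nbc hxb.symm hxc.symm dab dac hax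
  have satB : ∀ z, z ≠ a → z ≠ c → z ≠ d → G.mult b z = 0 :=
    G.satAt hcubic b a c d nac nad ncd (by rw [G.symm]; exact dab) dbc dbd
  have satC : ∀ z, z ≠ a → z ≠ b → z ≠ d → G.mult c z = 0 :=
    G.satAt hcubic c a b d nab nad nbd (by rw [G.symm]; exact dac)
      (by rw [G.symm]; exact dbc) dcd
  obtain ⟨haB, haC, haD, hBC, hBD, hCD, mAD, mAB, mAC, mBC, mBD, mCD⟩ := hd2
  have mbx : G.mult b x = 0 := satB x hxa hxc hxd
  have mcx : G.mult c x = 0 := satC x hxa hxb hxd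
  have hBmem : b = B ∨ c = B ∨ x = B := by
    by_contra h; push_neg at h
    have := satA B (Ne.symm h.1) (Ne.symm h.2.1) (Ne.symm h.2.2); omega
  have hCmem : b = C ∨ c = C ∨ x = C := by
    by_contra h; push_neg at h
    have := satA C (Ne.symm h.1) (Ne.symm h.2.1) (Ne.symm h.2.2); omega
  rcases hBmem with rfl | rfl | rfl <;> rcases hCmem with rfl | rfl | rfl
  · exact absurd rfl hBC
  · -- B = b, C = c
    have hDmem : a = D ∨ c = D ∨ d = D := by
      by_contra h; push_neg at h
      have := satB D (Ne.symm h.1) (Ne.symm h.2.1) (Ne.symm h.2.2); omega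
    rcases hDmem with rfl | rfl | rfl
    · exact absurd rfl haD
    · exact absurd rfl hCD
    · rfl
  · omega
  · -- B = c, C = b
    have hDmem : a = D ∨ b = D ∨ d = D := by
      by_contra h; push_neg at h
      have := satC D (Ne.symm h.1) (Ne.symm h.2.1) (Ne.symm h.2.2); omega
    rcases hDmem with rfl | rfl | rfl
    · exact absurd rfl haD
    · exact absurd rfl hCD
    · ext z; simp only [Finset.mem_insert, Finset.mem_singleton]; tauto
  · exact absurd rfl hBC
  · omega
  · rw [G.symm] at mBC; omega
  · rw [G.symm] at mBC; omega
  · exact absurd rfl hBC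

lemma hitPb (G : Multigraph V) (hcubic : G.IsCubic)
    (a b c d x : V) (hdiam : G.IsDiamond a b c d) (hax : G.mult a x = 1)
    (hxa : x ≠ a) (hxb : x ≠ b) (hxc : x ≠ c) (hxd : x ≠ d)
    (B C D : V) (hd2 : G.IsDiamond b B C D) : False := by
  obtain ⟨nab, nac, nad, nbc, nbd, ncd, dad, dab, dac, dbc, dbd, dcd⟩ := hdiam
  have satA : ∀ z, z ≠ b → z ≠ c → z ≠ x → G.mult a z = 0 :=
    G.satAt hcubic a b c x nbc hxb.symm hxc.symm dab dac hax
  have satB : ∀ z, z ≠ a → z ≠ c → z ≠ d → G.mult b z = 0 :=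
    G.satAt hcubic b a c d nac nad ncd (by rw [G.symm]; exact dab) dbc dbd
  have satC : ∀ z, z ≠ a → z ≠ b → z ≠ d → G.mult c z = 0 :=
    G.satAt hcubic c a b d nab nad nbd (by rw [G.symm]; exact dac)
      (by rw [G.symm]; exact dbc) dcd
  obtain ⟨hbB, hbC, hbD, hBC, hBD, hCD, mAD, mAB, mAC, mBC, mBD, mCD⟩ := hd2
  have mcx : G.mult c x = 0 := satC x hxa hxb hxd
  have mba : G.mult b a = 1 := by rw [G.symm]; exact dab
  have hBmem : a = B ∨ c = B ∨ d = B := by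
    by_contra h; push_neg at h
    have := satB B (Ne.symm h.1) (Ne.symm h.2.1) (Ne.symm h.2.2); omega
  have hCmem : a = C ∨ c = C ∨ d = C := by
    by_contra h; push_neg at h
    have := satB C (Ne.symm h.1) (Ne.symm h.2.1) (Ne.symm h.2.2); omega
  rcases hBmem with rfl | rfl | rfl <;> rcases hCmem with rfl | rfl | rfl
  · exact absurd rfl hBC
  · -- B = a, C = c : D adjacent to a and c
    have hDmem : b = D ∨ c = D ∨ x = D := by
      by_contra h; push_neg at h
      have := satA D (Ne.symm h.1) (Ne.symm h.2.1) (Ne.symm h.2.2); omega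
    rcases hDmem with rfl | rfl | rfl
    · exact absurd rfl hbD
    · exact absurd rfl hCD
    · omega
  · omega
  · -- B = c, C = a : D adjacent to c
    have hDmem : a = D ∨ b = D ∨ d = D := by
      by_contra h; push_neg at h
      have := satC D (Ne.symm h.1) (Ne.symm h.2.1) (Ne.symm h.2.2); omega
    rcases hDmem with rfl | rfl | rfl
    · exact absurd rfl hCD
    · exact absurd rfl hbD
    · omega
  · exact absurd rfl hBC
  · -- B = c, C = d : D adjacent to c
    have hDmem : a = D ∨ b = D ∨ d = D := by
      by_contra h; push_neg at h
      have := satC D (Ne.symm h.1) (Ne.symm h.2.1) (Ne.symm h.2.2); omega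
    rcases hDmem with rfl | rfl | rfl
    · omega
    · exact absurd rfl hbD
    · exact absurd rfl hCD
  · rw [G.symm] at mBC; omega
  · -- B = d, C = c : D adjacent to c
    have hDmem : a = D ∨ b = D ∨ d = D := by
      by_contra h; push_neg at h
      have := satC D (Ne.symm h.1) (Ne.symm h.2.1) (Ne.symm h.2.2); omega
    rcases hDmem with rfl | rfl | rfl
    · omega
    · exact absurd rfl hbD
    · exact absurd rfl hBD
  · exact absurd rfl hBC

lemma hitIa (G : Multigraph V) (hcubic : G.IsCubic)
    (a b c d x : V) (hdiam : G.IsDiamond a b c d) (hax : G.mult a x = 1)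
    (hxa : x ≠ a) (hxb : x ≠ b) (hxc : x ≠ c) (hxd : x ≠ d)
    (A C D : V) (hd2 : G.IsDiamond A a C D) : False := by
  obtain ⟨nab, nac, nad, nbc, nbd, ncd, dad, dab, dac, dbc, dbd, dcd⟩ := hdiam
  have satA : ∀ z, z ≠ b → z ≠ c → z ≠ x → G.mult a z = 0 :=
    G.satAt hcubic a b c x nbc hxb.symm hxc.symm dab dac hax
  have satB : ∀ z, z ≠ a → z ≠ c → z ≠ d → G.mult b z = 0 :=
    G.satAt hcubic b a c d nac nad ncd (by rw [G.symm]; exact dab) dbc dbd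
  have satC : ∀ z, z ≠ a → z ≠ b → z ≠ d → G.mult c z = 0 :=
    G.satAt hcubic c a b d nab nad nbd (by rw [G.symm]; exact dac)
      (by rw [G.symm]; exact dbc) dcd
  obtain ⟨hAa, hAC, hAD, haC, haD, hCD, m0, m1, m2, m3, m4, m5⟩ := hd2
  have mbx : G.mult b x = 0 := satB x hxa hxc hxd
  have mcx : G.mult c x = 0 := satC x hxa hxb hxd
  have hAmem : b = A ∨ c = A ∨ x = A := by
    by_contra h; push_neg at h
    have := satA A (Ne.symm h.1) (Ne.symm h.2.1) (Ne.symm h.2.2)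
    rw [G.symm] at m1; omega
  have hCmem : b = C ∨ c = C ∨ x = C := by
    by_contra h; push_neg at h
    have := satA C (Ne.symm h.1) (Ne.symm h.2.1) (Ne.symm h.2.2); omega
  have hDmem : b = D ∨ c = D ∨ x = D := by
    by_contra h; push_neg at h
    have := satA D (Ne.symm h.1) (Ne.symm h.2.1) (Ne.symm h.2.2); omega
  rcases hAmem with rfl | rfl | rfl <;> rcases hCmem with rfl | rfl | rfl <;>
    rcases hDmem with rfl | rfl | rfl <;>
    first
      | exact absurd rfl hAC
      | exact absurd rfl hAD
      | exact absurd rfl hCD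
      | omega
      | (rw [G.symm] at m2; omega)
      | (rw [G.symm] at m5; omega)

lemma hitIb (G : Multigraph V) (hcubic : G.IsCubic)
    (a b c d x : V) (hdiam : G.IsDiamond a b c d) (hax : G.mult a x = 1)
    (hxa : x ≠ a) (hxb : x ≠ b) (hxc : x ≠ c) (hxd : x ≠ d)
    (A C D : V) (hd2 : G.IsDiamond A b C D) :
    ({A, b, C, D} : Finset V) = {a, b, c, d} := by
  obtain ⟨nab, nac, nad, nbc, nbd, ncd, dad, dab, dac, dbc, dbd, dcd⟩ := hdiam
  have satB : ∀ z, z ≠ a → z ≠ c → z ≠ d → G.mult b z = 0 :=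
    G.satAt hcubic b a c d nac nad ncd (by rw [G.symm]; exact dab) dbc dbd
  obtain ⟨hAb, hAC, hAD, hbC, hbD, hCD, m0, m1, m2, m3, m4, m5⟩ := hd2
  have hAmem : a = A ∨ c = A ∨ d = A := by
    by_contra h; push_neg at h
    have := satB A (Ne.symm h.1) (Ne.symm h.2.1) (Ne.symm h.2.2)
    rw [G.symm] at m1; omega
  have hCmem : a = C ∨ c = C ∨ d = C := by
    by_contra h; push_neg at h
    have := satB C (Ne.symm h.1) (Ne.symm h.2.1) (Ne.symm h.2.2); omega
  have hDmem : a = D ∨ c = D ∨ d = D := by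
    by_contra h; push_neg at h
    have := satB D (Ne.symm h.1) (Ne.symm h.2.1) (Ne.symm h.2.2); omega
  rcases hAmem with rfl | rfl | rfl <;> rcases hCmem with rfl | rfl | rfl <;>
    rcases hDmem with rfl | rfl | rfl <;>
    first
      | exact absurd rfl hAC
      | exact absurd rfl hAD
      | exact absurd rfl hCD
      | omega
      | rfl
      | (rw [G.symm] at m0; omega)
      | (rw [G.symm] at m2; omega)
      | (rw [G.symm] at m5; omega)
      | (ext z; simp only [Finset.mem_insert, Finset.mem_singleton]; tauto)

end Multigraph
namespace Multigraph

variable {V : Type*} [DecidableEq V] [Fintype V]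

lemma ringK4 (G : Multigraph V) (hconn : G.Connected) (hcubic : G.IsCubic)
    (a b c d x y : V) (hdiam : G.IsDiamond a b c d)
    (hax : G.mult a x = 1) (hdy : G.mult d y = 1)
    (hxo : x ∉ ({a, b, c, d} : Finset V)) (hyo : y ∉ ({a, b, c, d} : Finset V))
    (hxy : G.mult x y = 0) (hxney : x ≠ y)
    (p q : V) (hd2 : G.IsDiamond x p q y) :
    (G.diamondReduce a b c d x y).IsK4 := by
  have hxo' := hxo
  have hyo' := hyo
  simp only [Finset.mem_insert, Finset.mem_singleton, not_or] at hxo' hyo'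
  obtain ⟨hxa, hxb, hxc, hxd⟩ := hxo'
  obtain ⟨hya, hyb, hyc, hyd⟩ := hyo'
  replace hxa : x ≠ a := hxa
  replace hxb : x ≠ b := hxb
  replace hxc : x ≠ c := hxc
  replace hxd : x ≠ d := hxd
  replace hya : y ≠ a := hya
  replace hyb : y ≠ b := hyb
  replace hyc : y ≠ c := hyc
  replace hyd : y ≠ d := hyd
  obtain ⟨nab, nac, nad, nbc, nbd, ncd, dad, dab, dac, dbc, dbd, dcd⟩ := hdiam
  obtain ⟨nxp, nxq, nxy2, npq, npy, nqy, mxy0, mxp, mxq, mpq, mpy, mqy⟩ := hd2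
  have satA : ∀ z, z ≠ b → z ≠ c → z ≠ x → G.mult a z = 0 :=
    G.satAt hcubic a b c x nbc hxb.symm hxc.symm dab dac hax
  have satB : ∀ z, z ≠ a → z ≠ c → z ≠ d → G.mult b z = 0 :=
    G.satAt hcubic b a c d nac nad ncd (by rw [G.symm]; exact dab) dbc dbd
  have satC : ∀ z, z ≠ a → z ≠ b → z ≠ d → G.mult c z = 0 :=
    G.satAt hcubic c a b d nab nad nbd (by rw [G.symm]; exact dac)
      (by rw [G.symm]; exact dbc) dcd
  have satD : ∀ z, z ≠ b → z ≠ c → z ≠ y → G.mult d z = 0 :=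
    G.satAt hcubic d b c y nbc hyb.symm hyc.symm (by rw [G.symm]; exact dbd)
      (by rw [G.symm]; exact dcd) hdy
  have may : G.mult a y = 0 := satA y hyb hyc hxney.symm
  have mdx : G.mult d x = 0 := satD x hxb hxc hxney
  have hpa : p ≠ a := by intro h; rw [h] at mpy; omega
  have hpb : p ≠ b := by
    intro h; rw [h] at mpy; have := satB y hya hyc hyd; omega
  have hpc : p ≠ c := by
    intro h; rw [h] at mpy; have := satC y hya hyb hyd; omega
  have hpd : p ≠ d := by
    intro h; rw [h] at mxp; rw [G.symm] at mxp; omega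
  have hqa : q ≠ a := by intro h; rw [h] at mqy; omega
  have hqb : q ≠ b := by
    intro h; rw [h] at mqy; have := satB y hya hyc hyd; omega
  have hqc : q ≠ c := by
    intro h; rw [h] at mqy; have := satC y hya hyb hyd; omega
  have hqd : q ≠ d := by
    intro h; rw [h] at mxq; rw [G.symm] at mxq; omega
  have satX : ∀ z, z ≠ a → z ≠ p → z ≠ q → G.mult x z = 0 :=
    G.satAt hcubic x a p q hpa.symm hqa.symm npq (by rw [G.symm]; exact hax) mxp mxq
  have satY : ∀ z, z ≠ d → z ≠ p → z ≠ q → G.mult y z = 0 :=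
    G.satAt hcubic y d p q hpd.symm hqd.symm npq (by rw [G.symm]; exact hdy)
      (by rw [G.symm]; exact mpy) (by rw [G.symm]; exact mqy)
  have satP : ∀ z, z ≠ x → z ≠ q → z ≠ y → G.mult p z = 0 :=
    G.satAt hcubic p x q y nxq nxy2 nqy (by rw [G.symm]; exact mxp) mpq mpy
  have satQ : ∀ z, z ≠ x → z ≠ p → z ≠ y → G.mult q z = 0 :=
    G.satAt hcubic q x p y nxp nxy2 npy (by rw [G.symm]; exact mxq)
      (by rw [G.symm]; exact mpq) mqy
  set inS : V → Prop := fun v =>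
    v = a ∨ v = b ∨ v = c ∨ v = d ∨ v = x ∨ v = y ∨ v = p ∨ v = q with hinS
  have closed : ∀ u v : V, inS u → 0 < G.mult u v → inS v := by
    intro u v hu hm
    by_contra hv
    simp only [hinS, not_or] at hv
    obtain ⟨va, vb, vc, vd, vx, vy, vp, vq⟩ := hv
    rcases hu with h | h | h | h | h | h | h | h <;> rw [h] at hm
    · have := satA v vb vc vx; omega
    · have := satB v va vc vd; omega
    · have := satC v va vb vd; omega
    · have := satD v vb vc vy; omega
    · have := satX v va vp vq; omega
    · have := satY v vd vp vq; omega
    · have := satP v vx vq vy; omega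
    · have := satQ v vx vp vy; omega
  have key : ∀ (u v' : V) (w : G.toSimple.Walk u v'), inS u → inS v' := by
    intro u v' w
    induction w with
    | nil => exact fun h => h
    | cons hadj _ ih => exact fun hu => ih (closed _ _ hu (by obtain ⟨_, h2⟩ := hadj; exact h2))
  have reach : ∀ v, inS v := by
    intro v
    obtain ⟨w⟩ := (show SimpleGraph.Connected G.toSimple from hconn).preconnected a v
    exact key a v w (Or.inl rfl)
  have hPmem : p ∉ ({a, b, c, d} : Finset V) := by
    simp only [Finset.mem_insert, Finset.mem_singleton, not_or]
    exact ⟨hpa, hpb, hpc, hpd⟩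
  have hQmem : q ∉ ({a, b, c, d} : Finset V) := by
    simp only [Finset.mem_insert, Finset.mem_singleton, not_or]
    exact ⟨hqa, hqb, hqc, hqd⟩
  have memV' : ∀ v : {v : V // v ∉ ({a, b, c, d} : Finset V)},
      v.1 = x ∨ v.1 = y ∨ v.1 = p ∨ v.1 = q := by
    intro v
    have h8 := reach v.1
    have hv := v.2
    simp only [Finset.mem_insert, Finset.mem_singleton, not_or] at hv
    rcases h8 with h | h | h | h | h | h | h | h
    exacts [absurd h hv.1, absurd h hv.2.1, absurd h hv.2.2.1, absurd h hv.2.2.2,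
      Or.inl h, Or.inr (Or.inl h), Or.inr (Or.inr (Or.inl h)), Or.inr (Or.inr (Or.inr h))]
  set G' := G.diamondReduce a b c d x y with hG'
  have red : ∀ u v : {v : V // v ∉ ({a, b, c, d} : Finset V)},
      G'.mult u v = if u.1 ≠ v.1 ∧ ((u.1 = x ∧ v.1 = y) ∨ (u.1 = y ∧ v.1 = x))
        then G.mult u.1 v.1 + 1 else G.mult u.1 v.1 := fun _ _ => rfl
  have cfalse : ∀ u v : V, (u ≠ x ∨ v ≠ y) → (u ≠ y ∨ v ≠ x) →
      ¬(u ≠ v ∧ ((u = x ∧ v = y) ∨ (u = y ∧ v = x))) := by tauto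
  have mult1 : ∀ u v : {v : V // v ∉ ({a, b, c, d} : Finset V)},
      u.1 ≠ v.1 → G'.mult u v = 1 := by
    intro u v hne
    rw [red]
    rcases memV' u with hu | hu | hu | hu <;> rcases memV' v with hv | hv | hv | hv <;>
      rw [hu, hv] <;> rw [hu, hv] at hne
    · exact absurd rfl hne
    · rw [if_pos ⟨hxney, Or.inl ⟨rfl, rfl⟩⟩, hxy]
    · rw [if_neg (cfalse _ _ (Or.inr npy) (Or.inl hxney))]; exact mxp
    · rw [if_neg (cfalse _ _ (Or.inr nqy) (Or.inl hxney))]; exact mxq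
    · rw [if_pos ⟨hxney.symm, Or.inr ⟨rfl, rfl⟩⟩, G.symm, hxy]
    · exact absurd rfl hne
    · rw [if_neg (cfalse _ _ (Or.inl hxney.symm) (Or.inr nxp.symm))]
      rw [G.symm]; exact mpy
    · rw [if_neg (cfalse _ _ (Or.inl hxney.symm) (Or.inr nxq.symm))]
      rw [G.symm]; exact mqy
    · rw [if_neg (cfalse _ _ (Or.inl nxp.symm) (Or.inl npy))]
      rw [G.symm]; exact mxp
    · rw [if_neg (cfalse _ _ (Or.inl nxp.symm) (Or.inl npy))]; exact mpy
    · exact absurd rfl hne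
    · rw [if_neg (cfalse _ _ (Or.inl nxp.symm) (Or.inl npy))]; exact mpq
    · rw [if_neg (cfalse _ _ (Or.inl nxq.symm) (Or.inl nqy))]
      rw [G.symm]; exact mxq
    · rw [if_neg (cfalse _ _ (Or.inl nxq.symm) (Or.inl nqy))]; exact mqy
    · rw [if_neg (cfalse _ _ (Or.inl nxq.symm) (Or.inl nqy))]
      rw [G.symm]; exact mpq
    · exact absurd rfl hne
  have hmle : ∀ u v : {v : V // v ∉ ({a, b, c, d} : Finset V)}, G'.mult u v ≤ 1 := by
    intro u v
    by_cases h : u.1 = v.1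
    · rw [red, if_neg (by rw [h]; tauto), h, G.loopless]
      omega
    · rw [mult1 u v h]
  set f : Fin 4 → {v : V // v ∉ ({a, b, c, d} : Finset V)} :=
    ![⟨x, hxo⟩, ⟨y, hyo⟩, ⟨p, hPmem⟩, ⟨q, hQmem⟩] with hf
  have hinj : Function.Injective f := by
    intro i j hij
    fin_cases i <;> fin_cases j <;>
      first
        | rfl
        | (exfalso
           have := congrArg Subtype.val hij
           simp only [hf, Matrix.cons_val_zero, Matrix.cons_val_one, Matrix.head_cons,
             Matrix.cons_val_two, Matrix.tail_cons, Matrix.cons_val_three] at this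
           first
             | exact hxney this | exact hxney this.symm
             | exact nxp this | exact nxp this.symm
             | exact nxq this | exact nxq this.symm
             | exact npq this | exact npq this.symm
             | exact npy this | exact npy this.symm
             | exact nqy this | exact nqy this.symm)
  have hsurj : Function.Surjective f := by
    intro v
    rcases memV' v with h | h | h | h
    · exact ⟨0, Subtype.ext h.symm⟩
    · exact ⟨1, Subtype.ext h.symm⟩
    · exact ⟨2, Subtype.ext h.symm⟩
    · exact ⟨3, Subtype.ext h.symm⟩
  have e : Fin 4 ≃ {v : V // v ∉ ({a, b, c, d} : Finset V)} :=
    Equiv.ofBijective f ⟨hinj, hsurj⟩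
  have htop : G'.toSimple = (⊤ : SimpleGraph {v : V // v ∉ ({a, b, c, d} : Finset V)}) := by
    ext u v
    constructor
    · intro h; obtain ⟨h1, _⟩ := h; exact h1
    · intro h
      have hne : u.1 ≠ v.1 := fun hh => h (Subtype.ext hh)
      exact (⟨h, by rw [mult1 u v hne]; omega⟩ : u ≠ v ∧ 0 < G'.mult u v)
  refine ⟨?_, hmle⟩
  rw [htop]
  exact ⟨SimpleGraph.Iso.completeGraph e.symm⟩

end Multigraph
/-- If `G'` is not `K₄` and `xy` was not an edge of `G`, then `G'` has exactly
one diamond fewer than `G`. -/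
theorem stmt15 {V : Type*} [Fintype V] [DecidableEq V] (G : Multigraph V)
    (hconn : G.Connected) (hclaw : G.IsClawFree) (hcubic : G.IsCubic)
    (hK4 : ¬ G.IsK4) (a b c d x y : V) (hdiam : G.IsDiamond a b c d)
    (hx : G.Adj a x) (hxo : x ∉ ({a, b, c, d} : Finset V))
    (hy : G.Adj d y) (hyo : y ∉ ({a, b, c, d} : Finset V))
    (hK4' : ¬ (G.diamondReduce a b c d x y).IsK4) (hxy : G.mult x y = 0) :
    (G.diamondReduce a b c d x y).diamondCount + 1 = G.diamondCount := by
  classical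
  have hxo' := hxo
  have hyo' := hyo
  simp only [Finset.mem_insert, Finset.mem_singleton, not_or] at hxo' hyo'
  obtain ⟨hxa, hxb, hxc, hxd⟩ := hxo'
  obtain ⟨hya, hyb, hyc, hyd⟩ := hyo'
  replace hxa : x ≠ a := hxa
  replace hxb : x ≠ b := hxb
  replace hxc : x ≠ c := hxc
  replace hxd : x ≠ d := hxd
  replace hya : y ≠ a := hya
  replace hyb : y ≠ b := hyb
  replace hyc : y ≠ c := hyc
  replace hyd : y ≠ d := hyd
  obtain ⟨nab, nac, nad, nbc, nbd, ncd, dad, dab, dac, dbc, dbd, dcd⟩ := id hdiam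
  have hax : G.mult a x = 1 :=
    (G.pin hcubic a b c x nbc hxb hxc dab dac hx.2).1
  have hdy : G.mult d y = 1 :=
    (G.pin hcubic d b c y nbc hyb hyc (by rw [G.symm]; exact dbd)
      (by rw [G.symm]; exact dcd) hy.2).1
  have hxney : x ≠ y :=
    G.xney hclaw hcubic a b c d x y hdiam hax hdy hxa hxb hxc hxd hya hyb hyc hyd
  have hdiam' : G.IsDiamond d c b a := hdiam.rev.swapBC
  have red : ∀ u v : {v : V // v ∉ ({a, b, c, d} : Finset V)},
      (G.diamondReduce a b c d x y).mult u v =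
        if u.1 ≠ v.1 ∧ ((u.1 = x ∧ v.1 = y) ∨ (u.1 = y ∧ v.1 = x))
        then G.mult u.1 v.1 + 1 else G.mult u.1 v.1 := fun _ _ => rfl
  set G' := G.diamondReduce a b c d x y with hG'
  have pairuniq : ∀ u v u' v' : {v : V // v ∉ ({a, b, c, d} : Finset V)},
      ((u.1 = x ∧ v.1 = y) ∨ (u.1 = y ∧ v.1 = x)) →
      ((u'.1 = x ∧ v'.1 = y) ∨ (u'.1 = y ∧ v'.1 = x)) →
      (u = u' ∧ v = v') ∨ (u = v' ∧ v = u') := by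
    rintro u v u' v' (⟨h1, h2⟩ | ⟨h1, h2⟩) (⟨h3, h4⟩ | ⟨h3, h4⟩)
    · exact Or.inl ⟨Subtype.ext (h1.trans h3.symm), Subtype.ext (h2.trans h4.symm)⟩
    · exact Or.inr ⟨Subtype.ext (h1.trans h4.symm), Subtype.ext (h2.trans h3.symm)⟩
    · exact Or.inr ⟨Subtype.ext (h1.trans h4.symm), Subtype.ext (h2.trans h3.symm)⟩
    · exact Or.inl ⟨Subtype.ext (h1.trans h3.symm), Subtype.ext (h2.trans h4.symm)⟩
  -- Forward: every diamond of G' is a diamond of G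
  have fwd : ∀ A B C D : {v : V // v ∉ ({a, b, c, d} : Finset V)}, G'.IsDiamond A B C D → G.IsDiamond A.1 B.1 C.1 D.1 := by
    intro A B C D hd'
    obtain ⟨hAB, hAC, hAD, hBC, hBD, hCD, m0, m1, m2, m3, m4, m5⟩ := hd'
    have vAB : A.1 ≠ B.1 := fun h => hAB (Subtype.ext h)
    have vAC : A.1 ≠ C.1 := fun h => hAC (Subtype.ext h)
    have vAD : A.1 ≠ D.1 := fun h => hAD (Subtype.ext h)
    have vBC : B.1 ≠ C.1 := fun h => hBC (Subtype.ext h)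
    have vBD : B.1 ≠ D.1 := fun h => hBD (Subtype.ext h)
    have vCD : C.1 ≠ D.1 := fun h => hCD (Subtype.ext h)
    have pA := A.2; have pB := B.2; have pC := C.2; have pD := D.2
    simp only [Finset.mem_insert, Finset.mem_singleton, not_or] at pA pB pC pD
    obtain ⟨pAa, pAb, pAc, pAd⟩ := pA
    obtain ⟨pBa, pBb, pBc, pBd⟩ := pB
    obtain ⟨pCa, pCb, pCc, pCd⟩ := pC
    obtain ⟨pDa, pDb, pDc, pDd⟩ := pD
    rw [red] at m0 m1 m2 m3 m4 m5
    by_cases pAD : (A.1 = x ∧ D.1 = y) ∨ (A.1 = y ∧ D.1 = x)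
    · exfalso; rw [if_pos ⟨vAD, pAD⟩] at m0; omega
    rw [if_neg (fun h => pAD h.2)] at m0
    by_cases pAB : (A.1 = x ∧ B.1 = y) ∨ (A.1 = y ∧ B.1 = x)
    · exfalso
      rw [if_pos ⟨vAB, pAB⟩] at m1
      have mab0 : G.mult A.1 B.1 = 0 := by omega
      have nAC : ¬((A.1 = x ∧ C.1 = y) ∨ (A.1 = y ∧ C.1 = x)) := fun h => by
        rcases pairuniq A B A C pAB h with ⟨_, e⟩ | ⟨e, _⟩
        exacts [hBC e, hAC e]
      have nBC : ¬((B.1 = x ∧ C.1 = y) ∨ (B.1 = y ∧ C.1 = x)) := fun h => by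
        rcases pairuniq A B B C pAB h with ⟨e, _⟩ | ⟨e, _⟩
        exacts [hAB e, hAC e]
      have nBD : ¬((B.1 = x ∧ D.1 = y) ∨ (B.1 = y ∧ D.1 = x)) := fun h => by
        rcases pairuniq A B B D pAB h with ⟨e, _⟩ | ⟨e, _⟩
        exacts [hAB e, hAD e]
      have nCD : ¬((C.1 = x ∧ D.1 = y) ∨ (C.1 = y ∧ D.1 = x)) := fun h => by
        rcases pairuniq A B C D pAB h with ⟨e, _⟩ | ⟨e, _⟩
        exacts [hAC e, hAD e]
      rw [if_neg (fun h => nAC h.2)] at m2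
      rw [if_neg (fun h => nBC h.2)] at m3
      rw [if_neg (fun h => nBD h.2)] at m4
      rw [if_neg (fun h => nCD h.2)] at m5
      rcases pAB with ⟨ex, _⟩ | ⟨ex, _⟩
      · exact G.coreSideX hclaw hcubic a b c d x hdiam hax hxa hxb hxc hxd
          A.1 B.1 C.1 D.1 pAa pAb pAc pAd pBa pBb pBc pBd pCa pCb pCc pCd
          pDa pDb pDc pDd vAB vAC vAD vBC vBD vCD mab0 m2 m3 m4 m5 m0 ex
      · exact G.coreSideX hclaw hcubic d c b a y hdiam' hdy hyd hyc hyb hya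
          A.1 B.1 C.1 D.1 pAd pAc pAb pAa pBd pBc pBb pBa pCd pCc pCb pCa
          pDd pDc pDb pDa vAB vAC vAD vBC vBD vCD mab0 m2 m3 m4 m5 m0 ex
    rw [if_neg (fun h => pAB h.2)] at m1
    by_cases pAC : (A.1 = x ∧ C.1 = y) ∨ (A.1 = y ∧ C.1 = x)
    · exfalso
      rw [if_pos ⟨vAC, pAC⟩] at m2
      have mac0 : G.mult A.1 C.1 = 0 := by omega
      have nBC : ¬((B.1 = x ∧ C.1 = y) ∨ (B.1 = y ∧ C.1 = x)) := fun h => by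
        rcases pairuniq A C B C pAC h with ⟨e, _⟩ | ⟨e, _⟩
        exacts [hAB e, hAC e]
      have nBD : ¬((B.1 = x ∧ D.1 = y) ∨ (B.1 = y ∧ D.1 = x)) := fun h => by
        rcases pairuniq A C B D pAC h with ⟨e, _⟩ | ⟨e, _⟩
        exacts [hAB e, hAD e]
      have nCD : ¬((C.1 = x ∧ D.1 = y) ∨ (C.1 = y ∧ D.1 = x)) := fun h => by
        rcases pairuniq A C C D pAC h with ⟨e, _⟩ | ⟨e, _⟩
        exacts [hAC e, hAD e]
      rw [if_neg (fun h => nBC h.2)] at m3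
      rw [if_neg (fun h => nBD h.2)] at m4
      rw [if_neg (fun h => nCD h.2)] at m5
      have mcb : G.mult C.1 B.1 = 1 := by rw [G.symm]; exact m3
      rcases pAC with ⟨ex, _⟩ | ⟨ex, _⟩
      · exact G.coreSideX hclaw hcubic a b c d x hdiam hax hxa hxb hxc hxd
          A.1 C.1 B.1 D.1 pAa pAb pAc pAd pCa pCb pCc pCd pBa pBb pBc pBd
          pDa pDb pDc pDd vAC vAB vAD vBC.symm vCD vBD mac0 m1 mcb m5 m4 m0 ex
      · exact G.coreSideX hclaw hcubic d c b a y hdiam' hdy hyd hyc hyb hya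
          A.1 C.1 B.1 D.1 pAd pAc pAb pAa pCd pCc pCb pCa pBd pBc pBb pBa
          pDd pDc pDb pDa vAC vAB vAD vBC.symm vCD vBD mac0 m1 mcb m5 m4 m0 ex
    rw [if_neg (fun h => pAC h.2)] at m2
    by_cases pBC : (B.1 = x ∧ C.1 = y) ∨ (B.1 = y ∧ C.1 = x)
    · exfalso
      rw [if_pos ⟨vBC, pBC⟩] at m3
      have mbc0 : G.mult B.1 C.1 = 0 := by omega
      have nBD : ¬((B.1 = x ∧ D.1 = y) ∨ (B.1 = y ∧ D.1 = x)) := fun h => by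
        rcases pairuniq B C B D pBC h with ⟨_, e⟩ | ⟨e, _⟩
        exacts [hCD e, hBD e]
      have nCD : ¬((C.1 = x ∧ D.1 = y) ∨ (C.1 = y ∧ D.1 = x)) := fun h => by
        rcases pairuniq B C C D pBC h with ⟨e, _⟩ | ⟨e, _⟩
        exacts [hBC e, hBD e]
      rw [if_neg (fun h => nBD h.2)] at m4
      rw [if_neg (fun h => nCD h.2)] at m5
      rcases pBC with ⟨ex, ey⟩ | ⟨ex, ey⟩
      · exact G.coreCentralX hclaw hcubic a b c d x y hdiam hax hdy
          hxa hxb hxc hxd hya hyb hyc hyd hxy A.1 B.1 C.1 D.1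
          pAa pAb pAc pAd pDa pDb pDc pDd vAB vAC vAD vBC vBD vCD
          mbc0 m1 m2 m4 m5 m0 ex ey
      · have mcb0 : G.mult C.1 B.1 = 0 := by rw [G.symm]; exact mbc0
        exact G.coreCentralX hclaw hcubic a b c d x y hdiam hax hdy
          hxa hxb hxc hxd hya hyb hyc hyd hxy A.1 C.1 B.1 D.1
          pAa pAb pAc pAd pDa pDb pDc pDd vAC vAB vAD vBC.symm vCD vBD
          mcb0 m2 m1 m5 m4 m0 ey ex
    rw [if_neg (fun h => pBC h.2)] at m3
    by_cases pBD : (B.1 = x ∧ D.1 = y) ∨ (B.1 = y ∧ D.1 = x)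
    · exfalso
      rw [if_pos ⟨vBD, pBD⟩] at m4
      have mdb0 : G.mult D.1 B.1 = 0 := by rw [G.symm]; omega
      have nCD : ¬((C.1 = x ∧ D.1 = y) ∨ (C.1 = y ∧ D.1 = x)) := fun h => by
        rcases pairuniq B D C D pBD h with ⟨e, _⟩ | ⟨e, _⟩
        exacts [hBC e, hBD e]
      rw [if_neg (fun h => nCD h.2)] at m5
      have mdc : G.mult D.1 C.1 = 1 := by rw [G.symm]; exact m5
      have mba : G.mult B.1 A.1 = 1 := by rw [G.symm]; exact m1
      have mca : G.mult C.1 A.1 = 1 := by rw [G.symm]; exact m2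
      have mda0 : G.mult D.1 A.1 = 0 := by rw [G.symm]; exact m0
      rcases pBD with ⟨_, ey⟩ | ⟨_, ey⟩
      · exact G.coreSideX hclaw hcubic d c b a y hdiam' hdy hyd hyc hyb hya
          D.1 B.1 C.1 A.1 pDd pDc pDb pDa pBd pBc pBb pBa pCd pCc pCb pCa
          pAd pAc pAb pAa vBD.symm vCD.symm vAD.symm vBC vAB.symm vAC.symm
          mdb0 mdc m3 mba mca mda0 ey
      · exact G.coreSideX hclaw hcubic a b c d x hdiam hax hxa hxb hxc hxd
          D.1 B.1 C.1 A.1 pDa pDb pDc pDd pBa pBb pBc pBd pCa pCb pCc pCd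
          pAa pAb pAc pAd vBD.symm vCD.symm vAD.symm vBC vAB.symm vAC.symm
          mdb0 mdc m3 mba mca mda0 ey
    rw [if_neg (fun h => pBD h.2)] at m4
    by_cases pCD : (C.1 = x ∧ D.1 = y) ∨ (C.1 = y ∧ D.1 = x)
    · exfalso
      rw [if_pos ⟨vCD, pCD⟩] at m5
      have mdc0 : G.mult D.1 C.1 = 0 := by rw [G.symm]; omega
      have mdb : G.mult D.1 B.1 = 1 := by rw [G.symm]; exact m4
      have mcb : G.mult C.1 B.1 = 1 := by rw [G.symm]; exact m3
      have mca : G.mult C.1 A.1 = 1 := by rw [G.symm]; exact m2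
      have mba : G.mult B.1 A.1 = 1 := by rw [G.symm]; exact m1
      have mda0 : G.mult D.1 A.1 = 0 := by rw [G.symm]; exact m0
      rcases pCD with ⟨_, ey⟩ | ⟨_, ey⟩
      · exact G.coreSideX hclaw hcubic d c b a y hdiam' hdy hyd hyc hyb hya
          D.1 C.1 B.1 A.1 pDd pDc pDb pDa pCd pCc pCb pCa pBd pBc pBb pBa
          pAd pAc pAb pAa vCD.symm vBD.symm vAD.symm vBC.symm vAC.symm vAB.symm
          mdc0 mdb mcb mca mba mda0 ey
      · exact G.coreSideX hclaw hcubic a b c d x hdiam hax hxa hxb hxc hxd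
          D.1 C.1 B.1 A.1 pDa pDb pDc pDd pCa pCb pCc pCd pBa pBb pBc pBd
          pAa pAb pAc pAd vCD.symm vBD.symm vAD.symm vBC.symm vAC.symm vAB.symm
          mdc0 mdb mcb mca mba mda0 ey
    rw [if_neg (fun h => pCD h.2)] at m5
    exact ⟨vAB, vAC, vAD, vBC, vBD, vCD, m0, m1, m2, m3, m4, m5⟩
  -- vertex-disjointness of other diamonds of G from {a,b,c,d}
  have hitSlot1 : ∀ A B C D : V, G.IsDiamond A B C D → A ∈ ({a, b, c, d} : Finset V) →
      ({A, B, C, D} : Finset V) = {a, b, c, d} := by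
    intro A B C D hd hA
    simp only [Finset.mem_insert, Finset.mem_singleton] at hA
    rcases hA with h | h | h | h <;> obtain rfl := h.symm
    · exact G.hitP hcubic a b c d x hdiam hax hxa hxb hxc hxd B C D hd
    · exact (G.hitPb hcubic a b c d x hdiam hax hxa hxb hxc hxd B C D hd).elim
    · exact (G.hitPb hcubic d c b a y hdiam' hdy hyd hyc hyb hya B C D hd).elim
    · have e := G.hitP hcubic d c b a y hdiam' hdy hyd hyc hyb hya B C D hd
      rw [e]; exact Multigraph.quadRevFull d c b a
  have hitSlot2 : ∀ A B C D : V, G.IsDiamond A B C D → B ∈ ({a, b, c, d} : Finset V) →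
      ({A, B, C, D} : Finset V) = {a, b, c, d} := by
    intro A B C D hd hB
    simp only [Finset.mem_insert, Finset.mem_singleton] at hB
    rcases hB with h | h | h | h <;> obtain rfl := h.symm
    · exact (G.hitIa hcubic a b c d x hdiam hax hxa hxb hxc hxd A C D hd).elim
    · exact G.hitIb hcubic a b c d x hdiam hax hxa hxb hxc hxd A C D hd
    · have e := G.hitIb hcubic d c b a y hdiam' hdy hyd hyc hyb hya A C D hd
      rw [e]; exact Multigraph.quadRevFull d c b a
    · exact (G.hitIa hcubic d c b a y hdiam' hdy hyd hyc hyb hya A C D hd).elim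
  have hitAll : ∀ A B C D : V, G.IsDiamond A B C D →
      ({A, B, C, D} : Finset V) ≠ {a, b, c, d} →
      A ∉ ({a, b, c, d} : Finset V) ∧ B ∉ ({a, b, c, d} : Finset V) ∧
      C ∉ ({a, b, c, d} : Finset V) ∧ D ∉ ({a, b, c, d} : Finset V) := by
    intro A B C D hd hne
    refine ⟨fun h => hne (hitSlot1 A B C D hd h), fun h => hne (hitSlot2 A B C D hd h),
      fun h => hne ?_, fun h => hne ?_⟩
    · rw [Multigraph.quadBC A B C D]
      exact hitSlot2 A C B D hd.swapBC h
    · rw [Multigraph.quadRev A B C D]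
      exact hitSlot1 D B C A hd.rev h
  have noP1 : ∀ u v : V, G.mult u v = 1 → ¬((u = x ∧ v = y) ∨ (u = y ∧ v = x)) := by
    rintro u v h (⟨h1, h2⟩ | ⟨h1, h2⟩) <;> rw [h1, h2] at h
    · rw [hxy] at h; omega
    · rw [G.symm, hxy] at h; omega
  set emb : {v : V // v ∉ ({a, b, c, d} : Finset V)} ↪ V := ⟨Subtype.val, Subtype.val_injective⟩ with hemb
  have hmap : ∀ u v w t : {v : V // v ∉ ({a, b, c, d} : Finset V)}, ({u, v, w, t} : Finset {v : V // v ∉ ({a, b, c, d} : Finset V)}).map emb = {u.1, v.1, w.1, t.1} := by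
    intro u v w t
    simp [hemb, Finset.map_insert, Finset.map_singleton]
  have himg : (fun s : Finset {v : V // v ∉ ({a, b, c, d} : Finset V)} => s.map emb) '' G'.diamondSets
      = G.diamondSets \ {({a, b, c, d} : Finset V)} := by
    ext s
    constructor
    · rintro ⟨s', ⟨A, B, C, D, rfl, hd'⟩, rfl⟩
      have hdG := fwd A B C D hd'
      refine ⟨⟨A.1, B.1, C.1, D.1, hmap A B C D, hdG⟩, ?_⟩
      simp only [Set.mem_singleton_iff]
      intro he
      rw [hmap A B C D] at he
      have ha : a ∈ ({A.1, B.1, C.1, D.1} : Finset V) := by rw [he]; simp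
      simp only [Finset.mem_insert, Finset.mem_singleton] at ha
      have hA := A.2; have hB := B.2; have hC := C.2; have hD := D.2
      rcases ha with h | h | h | h
      · exact hA (by rw [← h]; simp)
      · exact hB (by rw [← h]; simp)
      · exact hC (by rw [← h]; simp)
      · exact hD (by rw [← h]; simp)
    · rintro ⟨⟨A, B, C, D, rfl, hdG⟩, hne⟩
      rw [Set.mem_singleton_iff] at hne
      obtain ⟨h1, h2, h3, h4⟩ := hitAll A B C D hdG hne
      by_cases hP : (A = x ∧ D = y) ∨ (A = y ∧ D = x)
      · exfalso
        apply hK4'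
        rcases hP with ⟨e1, e2⟩ | ⟨e1, e2⟩
        · obtain rfl := e1.symm
          obtain rfl := e2.symm
          exact G.ringK4 hconn hcubic a b c d x y hdiam hax hdy hxo hyo hxy hxney B C hdG
        · obtain rfl := e1.symm
          obtain rfl := e2.symm
          exact G.ringK4 hconn hcubic a b c d x y hdiam hax hdy hxo hyo hxy hxney B C hdG.rev
      · obtain ⟨eAB, eAC, eAD, eBC, eBD, eCD, q0, q1, q2, q3, q4, q5⟩ := hdG
        refine ⟨({⟨A, h1⟩, ⟨B, h2⟩, ⟨C, h3⟩, ⟨D, h4⟩} : Finset {v : V // v ∉ ({a, b, c, d} : Finset V)}),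
          ⟨⟨A, h1⟩, ⟨B, h2⟩, ⟨C, h3⟩, ⟨D, h4⟩, rfl, ?_⟩, hmap _ _ _ _⟩
        refine ⟨fun h => eAB (congrArg Subtype.val h), fun h => eAC (congrArg Subtype.val h),
          fun h => eAD (congrArg Subtype.val h), fun h => eBC (congrArg Subtype.val h),
          fun h => eBD (congrArg Subtype.val h), fun h => eCD (congrArg Subtype.val h),
          ?_, ?_, ?_, ?_, ?_, ?_⟩
        · rw [red]; rw [if_neg (fun h => hP h.2)]; exact q0
        · rw [red]; rw [if_neg (fun h => noP1 A B q1 h.2)]; exact q1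
        · rw [red]; rw [if_neg (fun h => noP1 A C q2 h.2)]; exact q2
        · rw [red]; rw [if_neg (fun h => noP1 B C q3 h.2)]; exact q3
        · rw [red]; rw [if_neg (fun h => noP1 B D q4 h.2)]; exact q4
        · rw [red]; rw [if_neg (fun h => noP1 C D q5 h.2)]; exact q5
  have hmem0 : ({a, b, c, d} : Finset V) ∈ G.diamondSets := ⟨a, b, c, d, rfl, hdiam⟩
  have hinj : Function.Injective (fun s : Finset {v : V // v ∉ ({a, b, c, d} : Finset V)} => s.map emb) :=
    fun s t h => Finset.map_injective emb h
  show G'.diamondSets.ncard + 1 = G.diamondSets.ncard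
  rw [← Set.ncard_image_of_injective G'.diamondSets hinj, himg]
  exact Set.ncard_diff_singleton_add_one hmem0 (Set.toFinite _)
end

section
/- Let G be a connected claw-free cubic multigraph different from K4 admitting a desired bisection. Then V(G) can be partitioned into vertex-disjoint diamonds, triangles, trumpets, and digons, and the number of monochromatic edges of the desired bisection equals k + (|V(G)| - 4k - 2p)/3 = (|V(G)| - k - 2p)/3, where k is the number of diamonds and p the number of digons of G. -/
namespace Multigraph
open Finset

variable {V : Type*} [Fintype V] [DecidableEq V] {G : Multigraph V}

lemma deg_split (hc : G.IsCubic) (a : V) {b c : V} (hbc : b ≠ c) :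
    G.mult a b + G.mult a c + ∑ w ∈ (univ.erase b).erase c, G.mult a w = 3 := by
  have h1 : G.mult a c + ∑ w ∈ (univ.erase b).erase c, G.mult a w
      = ∑ w ∈ univ.erase b, G.mult a w :=
    Finset.add_sum_erase _ _ (by simp [hbc.symm])
  have h2 : G.mult a b + ∑ w ∈ univ.erase b, G.mult a w = ∑ w, G.mult a w :=
    Finset.add_sum_erase _ _ (mem_univ b)
  have h3 := hc a
  unfold degree at h3
  omega

lemma two_mult_le (hc : G.IsCubic) (a : V) {b c : V} (hbc : b ≠ c) :
    G.mult a b + G.mult a c ≤ 3 := by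
  have := deg_split hc a hbc; omega

lemma three_mult_le (hc : G.IsCubic) (a : V) {b c d : V} (hbc : b ≠ c) (hbd : b ≠ d)
    (hcd : c ≠ d) : G.mult a b + G.mult a c + G.mult a d ≤ 3 := by
  have h := deg_split hc a hbc
  have hd : d ∈ (univ.erase b).erase c := by simp [hcd.symm, hbd.symm]
  have := Finset.single_le_sum (f := G.mult a)
    (fun i _ => Nat.zero_le _) hd
  omega

lemma third_nbr (hc : G.IsCubic) {a b c : V} (hbc : b ≠ c)
    (hb : G.mult a b = 1) (hcm : G.mult a c = 1) :
    ∃ x, x ≠ a ∧ x ≠ b ∧ x ≠ c ∧ G.mult a x = 1 ∧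
      ∀ w, w ≠ b → w ≠ c → w ≠ x → G.mult a w = 0 := by
  have hd := deg_split hc a hbc
  set s := (univ.erase b).erase c with hs
  have hsum : ∑ w ∈ s, G.mult a w = 1 := by omega
  have hx : ∃ x ∈ s, G.mult a x ≠ 0 := by
    by_contra h
    push_neg at h
    have : ∑ w ∈ s, G.mult a w = 0 := Finset.sum_eq_zero (fun i hi => h i hi)
    omega
  obtain ⟨x, hxs, hx0⟩ := hx
  have hx1 : G.mult a x = 1 := by
    have := Finset.single_le_sum (f := G.mult a) (fun i _ => Nat.zero_le _) hxs
    omega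
  have hrest : ∑ w ∈ s.erase x, G.mult a w = 0 := by
    have := Finset.add_sum_erase s (G.mult a) hxs
    omega
  refine ⟨x, ?_, ?_, ?_, hx1, ?_⟩
  · intro h; subst h; rw [G.loopless] at hx1; omega
  · intro h; subst h; simp [hs] at hxs
  · intro h; subst h; simp [hs] at hxs
  · intro w hwb hwc hwx
    have hws : w ∈ s.erase x := by simp [hs, hwb, hwc, hwx]
    exact (Finset.sum_eq_zero_iff.mp hrest) w hws

lemma double_nbr (hc : G.IsCubic) {a b c : V} (hbc : b ≠ c)
    (h2 : G.mult a b = 2) (h1 : G.mult a c = 1) :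
    ∀ w, w ≠ b → w ≠ c → G.mult a w = 0 := by
  have hd := deg_split hc a hbc
  intro w hwb hwc
  have hws : w ∈ (univ.erase b).erase c := by simp [hwb, hwc]
  have hzero : ∑ w ∈ (univ.erase b).erase c, G.mult a w = 0 := by omega
  exact (Finset.sum_eq_zero_iff.mp hzero) w hws

lemma three_nbr (hc : G.IsCubic) {a b c d : V} (hbc : b ≠ c) (hbd : b ≠ d) (hcd : c ≠ d)
    (h1 : G.mult a b = 1) (h2 : G.mult a c = 1) (h3 : G.mult a d = 1) :
    ∀ w, w ≠ b → w ≠ c → w ≠ d → G.mult a w = 0 := by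
  obtain ⟨x, -, hxb, hxc, hx1, hz⟩ := third_nbr hc hbc h1 h2
  have hxd : x = d := by
    by_contra h
    have := hz d hbd.symm hcd.symm (fun hh => h hh.symm)
    omega
  subst hxd
  intro w hwb hwc hwd
  exact hz w hwb hwc hwd

lemma card2 {a b : V} (hab : a ≠ b) : ({a, b} : Finset V).card = 2 := by
  rw [Finset.card_insert_of_notMem (by simp [hab]), Finset.card_singleton]

lemma card3 {a b c : V} (hab : a ≠ b) (hac : a ≠ c) (hbc : b ≠ c) :
    ({a, b, c} : Finset V).card = 3 := by
  rw [Finset.card_insert_of_notMem (by simp [hab, hac]),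
    Finset.card_insert_of_notMem (by simp [hbc]), Finset.card_singleton]

lemma card4 {a b c d : V} (hab : a ≠ b) (hac : a ≠ c) (had : a ≠ d) (hbc : b ≠ c)
    (hbd : b ≠ d) (hcd : c ≠ d) : ({a, b, c, d} : Finset V).card = 4 := by
  rw [Finset.card_insert_of_notMem (by simp [hab, hac, had]),
    Finset.card_insert_of_notMem (by simp [hbc, hbd]),
    Finset.card_insert_of_notMem (by simp [hcd]), Finset.card_singleton]

lemma sum2 {α M : Type*} [DecidableEq α] [AddCommMonoid M] (g : α → M) {a b : α}
    (hab : a ≠ b) : ∑ x ∈ ({a, b} : Finset α), g x = g a + g b := by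
  rw [Finset.sum_insert (by simp [hab]), Finset.sum_singleton]

lemma sum3 {α M : Type*} [DecidableEq α] [AddCommMonoid M] (g : α → M) {a b c : α}
    (hab : a ≠ b) (hac : a ≠ c) (hbc : b ≠ c) :
    ∑ x ∈ ({a, b, c} : Finset α), g x = g a + g b + g c := by
  rw [Finset.sum_insert (by simp [hab, hac]), Finset.sum_insert (by simp [hbc]),
    Finset.sum_singleton, add_assoc]

lemma sum4 {α M : Type*} [DecidableEq α] [AddCommMonoid M] (g : α → M) {a b c d : α}
    (hab : a ≠ b) (hac : a ≠ c) (had : a ≠ d) (hbc : b ≠ c) (hbd : b ≠ d) (hcd : c ≠ d) :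
    ∑ x ∈ ({a, b, c, d} : Finset α), g x = g a + g b + g c + g d := by
  rw [Finset.sum_insert (by simp [hab, hac, had]), Finset.sum_insert (by simp [hbc, hbd]),
    Finset.sum_insert (by simp [hcd]), Finset.sum_singleton, add_assoc, add_assoc]

lemma sum5 {α M : Type*} [DecidableEq α] [AddCommMonoid M] (g : α → M) {a b c d e : α}
    (h1 : a ≠ b) (h2 : a ≠ c) (h3 : a ≠ d) (h4 : a ≠ e) (h5 : b ≠ c) (h6 : b ≠ d)
    (h7 : b ≠ e) (h8 : c ≠ d) (h9 : c ≠ e) (h10 : d ≠ e) :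
    ∑ x ∈ ({a, b, c, d, e} : Finset α), g x = g a + g b + g c + g d + g e := by
  rw [Finset.sum_insert (by simp [h1, h2, h3, h4]), Finset.sum_insert (by simp [h5, h6, h7]),
    Finset.sum_insert (by simp [h8, h9]), Finset.sum_insert (by simp [h10]),
    Finset.sum_singleton]
  simp [add_assoc]

end Multigraph
namespace Multigraph
open Finset

variable {V : Type*} [Fintype V] [DecidableEq V] {G : Multigraph V}

lemma not_K4_config (hconn : G.Connected) (hc : G.IsCubic) (hK4 : ¬ G.IsK4)
    {a b c d : V} (hab : a ≠ b) (hac : a ≠ c) (had : a ≠ d) (hbc : b ≠ c) (hbd : b ≠ d)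
    (hcd : c ≠ d) (m1 : G.mult a b = 1) (m2 : G.mult a c = 1) (m3 : G.mult a d = 1)
    (m4 : G.mult b c = 1) (m5 : G.mult b d = 1) (m6 : G.mult c d = 1) : False := by
  have gs := G.symm
  have m1' : G.mult b a = 1 := by rw [gs]; exact m1
  have m2' : G.mult c a = 1 := by rw [gs]; exact m2
  have m3' : G.mult d a = 1 := by rw [gs]; exact m3
  have m4' : G.mult c b = 1 := by rw [gs]; exact m4
  have m5' : G.mult d b = 1 := by rw [gs]; exact m5
  have m6' : G.mult d c = 1 := by rw [gs]; exact m6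
  have hS : ∀ u, (u = a ∨ u = b ∨ u = c ∨ u = d) → ∀ w, G.mult u w ≠ 0 →
      (w = a ∨ w = b ∨ w = c ∨ w = d) := by
    intro u hu w hw
    by_contra hww
    push_neg at hww
    obtain ⟨w1, w2, w3, w4⟩ := hww
    rcases hu with rfl|rfl|rfl|rfl
    · exact hw (three_nbr hc hbc hbd hcd m1 m2 m3 w w2 w3 w4)
    · exact hw (three_nbr hc hac had hcd m1' m4 m5 w w1 w3 w4)
    · exact hw (three_nbr hc hab had hbd m2' m4' m6 w w1 w2 w4)
    · exact hw (three_nbr hc hab hac hbc m3' m5' m6' w w1 w2 w3)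
  have reach : ∀ (u w : V) (p : G.toSimple.Walk u w),
      (u = a ∨ u = b ∨ u = c ∨ u = d) → (w = a ∨ w = b ∨ w = c ∨ w = d) := by
    intro u w p
    induction p with
    | nil => exact id
    | cons h q ih =>
      intro hu
      apply ih
      exact hS _ hu _ (by have := (show _ ≠ _ ∧ 0 < G.mult _ _ from h).2; omega)
  have hall : ∀ w : V, w = a ∨ w = b ∨ w = c ∨ w = d := by
    intro w
    obtain ⟨p⟩ := hconn.preconnected a w
    exact reach a w p (Or.inl rfl)
  have hcard : Fintype.card V = 4 := by
    have huniv : (univ : Finset V) = {a, b, c, d} := by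
      ext x; simpa using hall x
    rw [← Finset.card_univ, huniv, card4 hab hac had hbc hbd hcd]
  apply hK4
  constructor
  · have htop : G.toSimple = ⊤ := by
      ext u v
      simp only [toSimple, SimpleGraph.top_adj]
      constructor
      · exact fun h => h.1
      · intro huv
        refine ⟨huv, ?_⟩
        rcases hall u with rfl|rfl|rfl|rfl <;> rcases hall v with rfl|rfl|rfl|rfl <;>
          simp_all <;> omega
    rw [htop]
    exact ⟨SimpleGraph.Iso.completeGraph (Fintype.equivFinOfCardEq hcard)⟩
  · intro u v
    rcases hall u with rfl|rfl|rfl|rfl <;> rcases hall v with rfl|rfl|rfl|rfl <;>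
      simp [G.loopless, m1, m2, m3, m4, m5, m6, m1', m2', m3', m4', m5', m6']

end Multigraph
namespace Multigraph
open Finset

variable {V : Type*} [Fintype V] [DecidableEq V] {G : Multigraph V}

lemma no_trumpet (hc : G.IsCubic) {B : Finset V} (hdes : G.IsDesired B) :
    ∀ a b c, ¬ G.IsTrumpet a b c := by
  rintro a b c ⟨hab, hac, hbc, h2, ha1, hb1⟩
  obtain ⟨-, -, db2, -, db4⟩ := hdes
  have hnot := db4 a b (by omega)
  have gs := G.symm
  by_cases hca : (a ∈ B ↔ c ∈ B)
  · obtain ⟨w, h1', h2', h3', mm1, mm2, mm3⟩ := db2 a c ⟨hac, by omega⟩ hca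
    by_cases hwb : w = b
    · subst hwb; omega
    · have := double_nbr hc hbc h2 ha1 w hwb (fun h => h3' h.symm)
      omega
  · have hcb : (b ∈ B ↔ c ∈ B) := by tauto
    have hba : G.mult b a = 2 := by rw [gs]; exact h2
    obtain ⟨w, h1', h2', h3', mm1, mm2, mm3⟩ := db2 b c ⟨hbc, by omega⟩ hcb
    by_cases hwa : w = a
    · subst hwa; omega
    · have := double_nbr hc (fun h => hac (h.symm ▸ rfl) : a ≠ c) hba hb1 w hwa
        (fun h => h3' h.symm)
      omega

lemma triangle_mem {u v w p : V} (ht : G.IsTriangle u v w)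
    (hp : p ∈ ({u, v, w} : Finset V)) :
    ∃ q r, G.IsTriangle p q r ∧ ({u, v, w} : Finset V) = {p, q, r} := by
  have gs := G.symm
  obtain ⟨h1, h2, h3, m1, m2, m3⟩ := ht
  simp only [mem_insert, mem_singleton] at hp
  rcases hp with rfl|rfl|rfl
  · exact ⟨v, w, ⟨h1, h2, h3, m1, m2, m3⟩, rfl⟩
  · refine ⟨u, w, ⟨fun h => h1 h.symm, h3, h2, by rw [gs]; exact m1, m3, m2⟩, ?_⟩
    ext x; simp; tauto
  · refine ⟨u, v, ⟨fun h => h2 h.symm, fun h => h3 h.symm, h1,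
      by rw [gs]; exact m2, by rw [gs]; exact m3, m1⟩, ?_⟩
    ext x; simp; tauto

lemma diamond_roles {a b c d : V} (hd : G.IsDiamond a b c d) {v : V}
    (hv : v ∈ ({a, b, c, d} : Finset V)) :
    (∃ x y z, G.IsDiamond v x y z ∧ ({a, b, c, d} : Finset V) = {v, x, y, z}) ∨
    (∃ x y z, G.IsDiamond x v y z ∧ ({a, b, c, d} : Finset V) = {x, v, y, z}) := by
  have gs := G.symm
  obtain ⟨h1, h2, h3, h4, h5, h6, m0, m1, m2, m3, m4, m5⟩ := hd
  simp only [mem_insert, mem_singleton] at hv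
  rcases hv with rfl|rfl|rfl|rfl
  · exact Or.inl ⟨b, c, d, ⟨h1, h2, h3, h4, h5, h6, m0, m1, m2, m3, m4, m5⟩, rfl⟩
  · exact Or.inr ⟨a, c, d, ⟨h1, h2, h3, h4, h5, h6, m0, m1, m2, m3, m4, m5⟩, rfl⟩
  · -- v = c : IsDiamond a c b d
    refine Or.inr ⟨a, b, d, ⟨h2, h1, h3, fun h => h4 h.symm, h6, h5, m0, m2, m1,
      by rw [gs]; exact m3, m5, m4⟩, ?_⟩
    ext x; simp; tauto
  · -- v = d : IsDiamond d b c a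
    refine Or.inl ⟨b, c, a, ⟨fun h => h5 h.symm, fun h => h6 h.symm, fun h => h3 h.symm,
      h4, fun h => h1 h.symm, fun h => h2 h.symm, by rw [gs]; exact m0,
      by rw [gs]; exact m4, by rw [gs]; exact m5, m3, by rw [gs]; exact m1,
      by rw [gs]; exact m2⟩, ?_⟩
    ext x; simp; tauto

/-- Neighbourhood of a middle vertex of a diamond. -/
lemma mid_nbrs (hc : G.IsCubic) {x v y z : V} (hd : G.IsDiamond x v y z) :
    ∀ w, w ≠ x → w ≠ y → w ≠ z → G.mult v w = 0 := by
  have gs := G.symm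
  obtain ⟨h1, h2, h3, h4, h5, h6, m0, m1, m2, m3, m4, m5⟩ := hd
  exact three_nbr hc h2 h3 h6 (by rw [gs]; exact m1) m3 m4

/-- Any vertex of a diamond has two distinct neighbours (simple edges) inside it. -/
lemma diamond_two_adj {a b c d : V} (hd : G.IsDiamond a b c d) {p : V}
    (hp : p ∈ ({a, b, c, d} : Finset V)) :
    ∃ q r, q ∈ ({a, b, c, d} : Finset V) ∧ r ∈ ({a, b, c, d} : Finset V) ∧ q ≠ r ∧
      q ≠ p ∧ r ≠ p ∧ G.mult p q = 1 ∧ G.mult p r = 1 := by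
  have gs := G.symm
  obtain ⟨h1, h2, h3, h4, h5, h6, m0, m1, m2, m3, m4, m5⟩ := hd
  simp only [mem_insert, mem_singleton] at hp
  rcases hp with rfl|rfl|rfl|rfl
  · exact ⟨b, c, by simp, by simp, h4, by solve_by_elim [Ne.symm], by solve_by_elim [Ne.symm],
      m1, m2⟩
  · exact ⟨a, c, by simp, by simp, by solve_by_elim [Ne.symm], by solve_by_elim [Ne.symm],
      by solve_by_elim [Ne.symm], by rw [gs]; exact m1, m3⟩
  · exact ⟨a, b, by simp, by simp, by solve_by_elim [Ne.symm], by solve_by_elim [Ne.symm],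
      by solve_by_elim [Ne.symm], by rw [gs]; exact m2, by rw [gs]; exact m3⟩
  · exact ⟨b, c, by simp, by simp, by solve_by_elim [Ne.symm], by solve_by_elim [Ne.symm],
      by solve_by_elim [Ne.symm], by rw [gs]; exact m4, by rw [gs]; exact m5⟩

/-- A triangle through a vertex of a diamond lies inside the diamond. -/
lemma triangle_in_diamond (hc : G.IsCubic) {a b c d : V} (hd : G.IsDiamond a b c d)
    {p q r : V} (ht : G.IsTriangle p q r) (hp : p ∈ ({a, b, c, d} : Finset V)) :
    q ∈ ({a, b, c, d} : Finset V) ∧ r ∈ ({a, b, c, d} : Finset V) := by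
  have gs := G.symm
  obtain ⟨t1, t2, t3, n1, n2, n3⟩ := ht
  rcases diamond_roles hd hp with ⟨x, y, z, hd', hset⟩ | ⟨x, y, z, hd', hset⟩
  · -- p an end: IsDiamond p x y z
    rw [hset]
    have hdpxyz := hd'
    obtain ⟨e1, e2, e3, e4, e5, e6, k0, k1, k2, k3, k4, k5⟩ := hd'
    have hdpyxz : G.IsDiamond p y x z :=
      ⟨e2, e1, e3, fun h => e4 h.symm, e6, e5, k0, k2, k1, by rw [gs]; exact k3, k5, k4⟩
    obtain ⟨t, hta, htx, hty, ht1, hz⟩ := third_nbr hc e4 k1 k2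
    have htz : t ≠ z := by intro h; subst h; omega
    have hq : q = x ∨ q = y ∨ q = t := by
      by_contra h; push_neg at h
      have := hz q h.1 h.2.1 h.2.2; omega
    have hr : r = x ∨ r = y ∨ r = t := by
      by_contra h; push_neg at h
      have := hz r h.1 h.2.1 h.2.2; omega
    have hxt : G.mult x t = 0 := mid_nbrs hc hdpxyz t hta hty htz
    have hyt : G.mult y t = 0 := mid_nbrs hc hdpyxz t hta htx htz
    have htx' : G.mult t x = 0 := by rw [gs]; exact hxt
    have hty' : G.mult t y = 0 := by rw [gs]; exact hyt
    have hqt : q ≠ t := by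
      intro h; subst h
      rcases hr with rfl|rfl|rfl
      · omega
      · omega
      · exact t3 rfl
    have hrt : r ≠ t := by
      intro h; subst h
      rcases hq with rfl|rfl|rfl
      · omega
      · omega
      · exact t3 rfl
    constructor
    · rcases hq with rfl|rfl|rfl
      · simp
      · simp
      · exact absurd rfl hqt
    · rcases hr with rfl|rfl|rfl
      · simp
      · simp
      · exact absurd rfl hrt
  · -- p middle
    rw [hset]
    have hq : q = x ∨ q = y ∨ q = z := by
      by_contra h; push_neg at h
      have := mid_nbrs hc hd' q h.1 h.2.1 h.2.2; omega
    have hr : r = x ∨ r = y ∨ r = z := by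
      by_contra h; push_neg at h
      have := mid_nbrs hc hd' r h.1 h.2.1 h.2.2; omega
    constructor
    · rcases hq with rfl|rfl|rfl <;> simp
    · rcases hr with rfl|rfl|rfl <;> simp

end Multigraph
namespace Multigraph
open Finset

variable {V : Type*} [DecidableEq V]

/-- Diamond piece. -/
def isPieceD (G : Multigraph V) (s : Finset V) : Prop :=
  ∃ a b c d, s = {a, b, c, d} ∧ G.IsDiamond a b c d

/-- Pure-triangle piece: a triangle disjoint from every diamond. -/
def isPieceT (G : Multigraph V) (s : Finset V) : Prop :=
  (∃ a b c, s = {a, b, c} ∧ G.IsTriangle a b c) ∧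
    ∀ a b c d, G.IsDiamond a b c d → Disjoint s ({a, b, c, d} : Finset V)

/-- Digon piece. -/
def isPieceG (G : Multigraph V) (s : Finset V) : Prop :=
  ∃ u v, s = {u, v} ∧ G.IsDigon u v

variable [Fintype V] {G : Multigraph V}

/-- Every triangle of `G` lies inside a diamond piece or forms a pure triangle piece. -/
lemma triangle_piece (hconn : G.Connected) (hc : G.IsCubic) (hK4 : ¬ G.IsK4)
    {u v w : V} (ht : G.IsTriangle u v w) :
    ∃ s : Finset V, (isPieceD G s ∨ isPieceT G s) ∧ u ∈ s ∧ v ∈ s ∧ w ∈ s := by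
  have gs := G.symm
  obtain ⟨huv, huw, hvw, m1, m2, m3⟩ := ht
  obtain ⟨xu, hu1, hu2, hu3, hu4, zu⟩ := third_nbr hc hvw m1 m2
  obtain ⟨xv, hv1, hv2, hv3, hv4, zv⟩ :=
    third_nbr hc huw (show G.mult v u = 1 by rw [gs]; exact m1) m3
  obtain ⟨xw, hw1, hw2, hw3, hw4, zw⟩ :=
    third_nbr hc huv (show G.mult w u = 1 by rw [gs]; exact m2)
      (show G.mult w v = 1 by rw [gs]; exact m3)
  by_cases h12 : xu = xv
  · -- diamond (w, u, v, xu) unless K4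
    have hv4' : G.mult v xu = 1 := by rw [h12]; exact hv4
    by_cases hwd : G.mult w xu = 0
    · refine ⟨{w, u, v, xu}, Or.inl ⟨w, u, v, xu, rfl, ?_⟩, by simp, by simp, by simp⟩
      exact ⟨fun h => huw h.symm, fun h => hvw h.symm, fun h => hu3 h.symm, huv,
        fun h => hu1 h.symm, fun h => hu2 h.symm, hwd,
        by rw [gs]; exact m2, by rw [gs]; exact m3, m1, hu4, hv4'⟩
    · exfalso
      have hxw : xu = xw := by
        by_contra hne
        exact hwd (zw xu hu1 hu2 hne)
      have hw4' : G.mult w xu = 1 := by rw [hxw]; exact hw4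
      exact not_K4_config hconn hc hK4 huv huw (fun h => hu1 h.symm) hvw
        (fun h => hu2 h.symm) (fun h => hu3 h.symm) m1 m2 hu4 m3 hv4' hw4'
  by_cases h13 : xu = xw
  · -- diamond (v, u, w, xu)
    have hw4' : G.mult w xu = 1 := by rw [h13]; exact hw4
    have hvd : G.mult v xu = 0 := by
      by_contra hne
      apply h12
      by_contra hne2
      exact hne (zv xu hu1 hu3 hne2)
    refine ⟨{v, u, w, xu}, Or.inl ⟨v, u, w, xu, rfl, ?_⟩, by simp, by simp, by simp⟩
    exact ⟨fun h => huv h.symm, hvw, fun h => hu2 h.symm, huw,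
      fun h => hu1 h.symm, fun h => hu3 h.symm, hvd,
      by rw [gs]; exact m1, m3, m2, hu4, hw4'⟩
  by_cases h23 : xv = xw
  · -- diamond (u, v, w, xv)
    have hw4' : G.mult w xv = 1 := by rw [h23]; exact hw4
    have hud : G.mult u xv = 0 := by
      by_contra hne
      apply h12
      by_contra hne2
      exact hne (zu xv hv1 hv3 (fun h => hne2 h.symm))
    refine ⟨{u, v, w, xv}, Or.inl ⟨u, v, w, xv, rfl, ?_⟩, by simp, by simp, by simp⟩
    exact ⟨huv, huw, fun h => hv2 h.symm, hvw, fun h => hv1 h.symm,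
      fun h => hv3 h.symm, hud, m1, m2, m3, hv4, hw4'⟩
  · -- pure triangle
    have ht' : G.IsTriangle u v w := ⟨huv, huw, hvw, m1, m2, m3⟩
    refine ⟨{u, v, w}, Or.inr ⟨⟨u, v, w, rfl, ht'⟩, ?_⟩, by simp, by simp, by simp⟩
    intro a b c d hd
    by_contra hnd
    rw [Finset.not_disjoint_iff] at hnd
    obtain ⟨p, hpT, hpD⟩ := hnd
    obtain ⟨q, r, htp, hTeq⟩ := triangle_mem ht' hpT
    have hqr := triangle_in_diamond hc hd htp hpD
    have hTD : ({u, v, w} : Finset V) ⊆ {a, b, c, d} := by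
      rw [hTeq]
      intro x hx
      simp only [mem_insert, mem_singleton] at hx
      rcases hx with rfl|rfl|rfl
      · exact hpD
      · exact hqr.1
      · exact hqr.2
    obtain ⟨d1, d2, d3, d4, d5, d6, -, -, -, -, -, -⟩ := id hd
    have hcards : (({a, b, c, d} : Finset V) \ {u, v, w}).card = 1 := by
      rw [card_sdiff_of_subset hTD, card4 d1 d2 d3 d4 d5 d6, card3 huv huw hvw]
    obtain ⟨p4, hp4⟩ := Finset.card_eq_one.mp hcards
    obtain ⟨hp4D, hp4T⟩ := mem_sdiff.mp (hp4 ▸ Finset.mem_singleton_self p4)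
    have hnu : p4 ≠ u := fun h => hp4T (by rw [h]; simp)
    have hnv : p4 ≠ v := fun h => hp4T (by rw [h]; simp)
    have hnw : p4 ≠ w := fun h => hp4T (by rw [h]; simp)
    obtain ⟨q', r', hq'D, hr'D, hq'r', hq'p, hr'p, a1, a2⟩ := diamond_two_adj hd hp4D
    have hq'T : q' ∈ ({u, v, w} : Finset V) := by
      by_contra h
      have hmem : q' ∈ ({a, b, c, d} : Finset V) \ {u, v, w} := mem_sdiff.mpr ⟨hq'D, h⟩
      rw [hp4] at hmem
      exact hq'p (Finset.mem_singleton.mp hmem)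
    have hr'T : r' ∈ ({u, v, w} : Finset V) := by
      by_contra h
      have hmem : r' ∈ ({a, b, c, d} : Finset V) \ {u, v, w} := mem_sdiff.mpr ⟨hr'D, h⟩
      rw [hp4] at hmem
      exact hr'p (Finset.mem_singleton.mp hmem)
    have keyu : G.mult p4 u = 1 → p4 = xu := by
      intro h
      by_contra hne
      have hz := zu p4 hnv hnw hne
      rw [gs] at h
      omega
    have keyv : G.mult p4 v = 1 → p4 = xv := by
      intro h
      by_contra hne
      have hz := zv p4 hnu hnw hne
      rw [gs] at h
      omega
    have keyw : G.mult p4 w = 1 → p4 = xw := by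
      intro h
      by_contra hne
      have hz := zw p4 hnu hnv hne
      rw [gs] at h
      omega
    simp only [mem_insert, mem_singleton] at hq'T hr'T
    rcases hq'T with rfl|rfl|rfl <;> rcases hr'T with rfl|rfl|rfl
    · exact hq'r' rfl
    · exact h12 ((keyu a1).symm.trans (keyv a2))
    · exact h13 ((keyu a1).symm.trans (keyw a2))
    · exact h12 ((keyu a2).symm.trans (keyv a1))
    · exact hq'r' rfl
    · exact h23 ((keyv a1).symm.trans (keyw a2))
    · exact h13 ((keyu a2).symm.trans (keyw a1))
    · exact h23 ((keyv a2).symm.trans (keyw a1))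
    · exact hq'r' rfl

end Multigraph
namespace Multigraph
open Finset

variable {V : Type*} [Fintype V] [DecidableEq V] {G : Multigraph V}

lemma trio (hconn : G.Connected) (hc : G.IsCubic) (hK4 : ¬ G.IsK4) {B : Finset V}
    (hdes : G.IsDesired B) {v a b : V} (hva : v ≠ a) (hvb : v ≠ b) (hab : a ≠ b)
    (ma : G.mult v a = 1) (mb : G.mult v b = 1) (hadj : G.mult a b ≠ 0) :
    ∃ s, (isPieceD G s ∨ isPieceT G s) ∧ v ∈ s := by
  have gs := G.symm
  have hle : G.mult a v + G.mult a b ≤ 3 := two_mult_le hc a hvb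
  have hav : G.mult a v = 1 := by rw [gs]; exact ma
  have h12 : G.mult a b = 1 ∨ G.mult a b = 2 := by omega
  rcases h12 with h1 | h2
  · obtain ⟨s, hs, hv, -, -⟩ := triangle_piece hconn hc hK4
      (show G.IsTriangle v a b from ⟨hva, hvb, hab, ma, mb, h1⟩)
    exact ⟨s, hs, hv⟩
  · exfalso
    exact no_trumpet hc hdes a b v
      ⟨hab, fun h => hva h.symm, fun h => hvb h.symm, h2, hav, by rw [gs]; exact mb⟩

lemma cover (hconn : G.Connected) (hclaw : G.IsClawFree) (hc : G.IsCubic)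
    (hK4 : ¬ G.IsK4) {B : Finset V} (hdes : G.IsDesired B) (v : V) :
    ∃ s, (isPieceD G s ∨ isPieceT G s ∨ isPieceG G s) ∧ v ∈ s := by
  have gs := G.symm
  by_cases hdig : ∃ u, 2 ≤ G.mult v u
  · obtain ⟨u, hu⟩ := hdig
    have hvu : v ≠ u := by
      intro h; rw [h, G.loopless] at hu; omega
    exact ⟨{v, u}, Or.inr (Or.inr ⟨v, u, rfl, hvu, hu⟩), by simp⟩
  · push_neg at hdig
    have hN : (univ.filter (fun u => G.mult v u = 1)).card = 3 := by
      have h1 : ∀ u : V, G.mult v u = if G.mult v u = 1 then 1 else 0 := by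
        intro u
        have := hdig u
        split <;> omega
      have h2 : G.degree v = ∑ u, (if G.mult v u = 1 then 1 else 0) := by
        unfold degree
        exact Finset.sum_congr rfl (fun u _ => h1 u)
      rw [← Finset.card_filter] at h2
      have := hc v
      omega
    obtain ⟨a, b, c, hab, hac, hbc, hNe⟩ := Finset.card_eq_three.mp hN
    have hma : G.mult v a = 1 := by
      have : a ∈ univ.filter (fun u => G.mult v u = 1) := by rw [hNe]; simp
      exact (Finset.mem_filter.mp this).2
    have hmb : G.mult v b = 1 := by
      have : b ∈ univ.filter (fun u => G.mult v u = 1) := by rw [hNe]; simp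
      exact (Finset.mem_filter.mp this).2
    have hmc : G.mult v c = 1 := by
      have : c ∈ univ.filter (fun u => G.mult v u = 1) := by rw [hNe]; simp
      exact (Finset.mem_filter.mp this).2
    have hva : v ≠ a := by intro h; rw [← h, G.loopless] at hma; omega
    have hvb : v ≠ b := by intro h; rw [← h, G.loopless] at hmb; omega
    have hvc : v ≠ c := by intro h; rw [← h, G.loopless] at hmc; omega
    have hadj : G.mult a b ≠ 0 ∨ G.mult a c ≠ 0 ∨ G.mult b c ≠ 0 := by
      by_contra hno
      push_neg at hno
      exact hclaw ⟨v, a, b, c, hva, hvb, hvc, hab, hac, hbc, hma, hmb, hmc,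
        hno.1, hno.2.1, hno.2.2⟩
    rcases hadj with h | h | h
    · obtain ⟨s, hs, hv⟩ := trio hconn hc hK4 hdes hva hvb hab hma hmb h
      exact ⟨s, hs.imp id Or.inl, hv⟩
    · obtain ⟨s, hs, hv⟩ := trio hconn hc hK4 hdes hva hvc hac hma hmc h
      exact ⟨s, hs.imp id Or.inl, hv⟩
    · obtain ⟨s, hs, hv⟩ := trio hconn hc hK4 hdes hvb hvc hbc hmb hmc h
      exact ⟨s, hs.imp id Or.inl, hv⟩

end Multigraph
namespace Multigraph
open Finset

variable {V : Type*} [Fintype V] [DecidableEq V] {G : Multigraph V}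

lemma digon_mem {u w v : V} (hd : G.IsDigon u w) (hv : v ∈ ({u, w} : Finset V)) :
    ∃ p, ({u, w} : Finset V) = {v, p} ∧ v ≠ p ∧ 2 ≤ G.mult v p := by
  obtain ⟨huw, hm⟩ := hd
  simp only [mem_insert, mem_singleton] at hv
  rcases hv with rfl|rfl
  · exact ⟨w, rfl, huw, hm⟩
  · refine ⟨u, by ext x; simp; tauto, fun h => huw h.symm, by rw [G.symm]; exact hm⟩

lemma mid_subset (hc : G.IsCubic) {p m q r : V} (hd : G.IsDiamond p m q r)
    {a' b' c' d' : V} (hd2 : G.IsDiamond a' b' c' d')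
    (hm : m ∈ ({a', b', c', d'} : Finset V)) :
    ({p, m, q, r} : Finset V) ⊆ {a', b', c', d'} := by
  have gs := G.symm
  obtain ⟨e1, e2, e3, e4, e5, e6, k0, k1, k2, k3, k4, k5⟩ := hd
  have t1 : G.IsTriangle m p q :=
    ⟨fun h => e1 h.symm, e4, e2, by rw [gs]; exact k1, k3, k2⟩
  have t2 : G.IsTriangle m q r := ⟨e4, e5, e6, k3, k4, k5⟩
  have h1 := triangle_in_diamond hc hd2 t1 hm
  have h2 := triangle_in_diamond hc hd2 t2 hm
  intro x hx
  simp only [mem_insert, mem_singleton] at hx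
  rcases hx with rfl|rfl|rfl|rfl
  · exact h1.1
  · exact hm
  · exact h1.2
  · exact h2.2

lemma diamond_card {a b c d : V} (hd : G.IsDiamond a b c d) :
    ({a, b, c, d} : Finset V).card = 4 := by
  obtain ⟨e1, e2, e3, e4, e5, e6, -, -, -, -, -, -⟩ := hd
  exact card4 e1 e2 e3 e4 e5 e6

lemma DD (hc : G.IsCubic) {a b c d a' b' c' d' v : V} (h1 : G.IsDiamond a b c d)
    (h2 : G.IsDiamond a' b' c' d') (hv1 : v ∈ ({a, b, c, d} : Finset V))
    (hv2 : v ∈ ({a', b', c', d'} : Finset V)) :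
    ({a, b, c, d} : Finset V) = ({a', b', c', d'} : Finset V) := by
  have hsub : ({a, b, c, d} : Finset V) ⊆ {a', b', c', d'} := by
    rcases diamond_roles h1 hv1 with ⟨x, y, z, hd', hset⟩ | ⟨x, y, z, hd', hset⟩
    · -- v an end : IsDiamond v x y z
      have hdc := hd'
      obtain ⟨e1, e2, e3, e4, e5, e6, k0, k1, k2, k3, k4, k5⟩ := hd'
      have t1 : G.IsTriangle v x y := ⟨e1, e2, e4, k1, k2, k3⟩
      have hx2 := (triangle_in_diamond hc h2 t1 hv2).1
      rw [hset]
      exact mid_subset hc hdc h2 hx2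
    · rw [hset]
      exact mid_subset hc hd' h2 hv2
  exact Finset.eq_of_subset_of_card_le hsub
    (le_of_eq ((diamond_card h2).trans (diamond_card h1).symm))

lemma TT (hconn : G.Connected) (hc : G.IsCubic) (hK4 : ¬ G.IsK4) {s t : Finset V}
    (hs : isPieceT G s) (ht : isPieceT G t) {v : V} (hvs : v ∈ s) (hvt : v ∈ t) :
    s = t := by
  have gs := G.symm
  obtain ⟨⟨u1, v1, w1, rfl, ht1⟩, hpure1⟩ := hs
  obtain ⟨⟨u2, v2, w2, rfl, ht2⟩, hpure2⟩ := ht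
  obtain ⟨q, r, htq, heq1⟩ := triangle_mem ht1 hvs
  obtain ⟨q', r', htq', heq2⟩ := triangle_mem ht2 hvt
  rw [heq1, heq2]
  obtain ⟨hq1, hq2, hq3, n1, n2, n3⟩ := htq
  obtain ⟨hq1', hq2', hq3', n1', n2', n3'⟩ := htq'
  obtain ⟨x, hx1, hx2, hx3, hx4, z⟩ := third_nbr hc hq3 n1 n2
  have hq'mem : q' = q ∨ q' = r ∨ q' = x := by
    by_contra h; push_neg at h
    have := z q' h.1 h.2.1 h.2.2; omega
  have hr'mem : r' = q ∨ r' = r ∨ r' = x := by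
    by_contra h; push_neg at h
    have := z r' h.1 h.2.1 h.2.2; omega
  have contraQ : G.mult x q = 1 → False := by
    intro hxq
    have hrv : G.mult r v = 1 := by rw [gs]; exact n2
    have hrq : G.mult r q = 1 := by rw [gs]; exact n3
    have qx : G.mult q x = 1 := by rw [gs]; exact hxq
    have hle := three_mult_le hc r hq1 (fun h => hx1 h.symm) (fun h => hx2 h.symm)
    by_cases hrx : G.mult r x = 0
    · have hdm : G.IsDiamond r v q x := ⟨fun h => hq2 h.symm, fun h => hq3 h.symm,
        fun h => hx3 h.symm, hq1, fun h => hx1 h.symm, fun h => hx2 h.symm,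
        hrx, hrv, hrq, n1, hx4, qx⟩
      have hdis := hpure1 r v q x hdm
      rw [Finset.disjoint_left] at hdis
      exact hdis hvs (by simp)
    · have hrx1 : G.mult r x = 1 := by omega
      exact not_K4_config hconn hc hK4 hq1 hq2 (fun h => hx1 h.symm) hq3
        (fun h => hx2 h.symm) (fun h => hx3 h.symm) n1 n2 hx4 n3 qx hrx1
  have contraR : G.mult x r = 1 → False := by
    intro hxr
    have hqv : G.mult q v = 1 := by rw [gs]; exact n1
    have rx : G.mult r x = 1 := by rw [gs]; exact hxr
    have hle := three_mult_le hc q hq2 (fun h => hx1 h.symm) (fun h => hx3 h.symm)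
    by_cases hqx : G.mult q x = 0
    · have hdm : G.IsDiamond q v r x := ⟨fun h => hq1 h.symm, hq3,
        fun h => hx2 h.symm, hq2, fun h => hx1 h.symm, fun h => hx3 h.symm,
        hqx, hqv, n3, n2, hx4, rx⟩
      have hdis := hpure1 q v r x hdm
      rw [Finset.disjoint_left] at hdis
      exact hdis hvs (by simp)
    · have hqx1 : G.mult q x = 1 := by omega
      exact not_K4_config hconn hc hK4 hq1 hq2 (fun h => hx1 h.symm) hq3
        (fun h => hx2 h.symm) (fun h => hx3 h.symm) n1 n2 hx4 n3 hqx1 rx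
  rcases hq'mem with rfl|rfl|rfl <;> rcases hr'mem with rfl|rfl|rfl
  · exact absurd rfl hq3'
  · rfl
  · exact (contraQ (by rw [gs]; exact n3')).elim
  · ext y; simp; tauto
  · exact absurd rfl hq3'
  · exact (contraR (by rw [gs]; exact n3')).elim
  · exact (contraQ n3').elim
  · exact (contraR n3').elim
  · exact absurd rfl hq3'

end Multigraph
namespace Multigraph
open Finset

variable {V : Type*} [Fintype V] [DecidableEq V] {G : Multigraph V}

/-- A vertex of a diamond or triangle cannot lie in a digon. -/
lemma not_digon_of_two_nbrs (hc : G.IsCubic) {v q r p : V} (hqr : q ≠ r)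
    (n1 : G.mult v q = 1) (n2 : G.mult v r = 1) (hp : 2 ≤ G.mult v p) : False := by
  have hpq : q ≠ p := by intro h; rw [h] at n1; omega
  have hpr : r ≠ p := by intro h; rw [h] at n2; omega
  have := three_mult_le hc v hqr hpq hpr
  omega

lemma DG (hc : G.IsCubic) {a b c d : V} (hd : G.IsDiamond a b c d)
    {u w v : V} (hg : G.IsDigon u w) (hv1 : v ∈ ({a, b, c, d} : Finset V))
    (hv2 : v ∈ ({u, w} : Finset V)) : False := by
  obtain ⟨p, -, -, hp⟩ := digon_mem hg hv2
  obtain ⟨q, r, -, -, hqr, -, -, a1, a2⟩ := diamond_two_adj hd hv1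
  exact not_digon_of_two_nbrs hc hqr a1 a2 hp

lemma TG (hc : G.IsCubic) {x y z : V} (ht : G.IsTriangle x y z)
    {u w v : V} (hg : G.IsDigon u w) (hv1 : v ∈ ({x, y, z} : Finset V))
    (hv2 : v ∈ ({u, w} : Finset V)) : False := by
  obtain ⟨p, -, -, hp⟩ := digon_mem hg hv2
  obtain ⟨q, r, htv, -⟩ := triangle_mem ht hv1
  exact not_digon_of_two_nbrs hc htv.2.2.1 htv.2.2.2.1 htv.2.2.2.2.1 hp

lemma GG (hc : G.IsCubic) {u w u' w' v : V} (hg : G.IsDigon u w) (hg' : G.IsDigon u' w')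
    (hv1 : v ∈ ({u, w} : Finset V)) (hv2 : v ∈ ({u', w'} : Finset V)) :
    ({u, w} : Finset V) = {u', w'} := by
  obtain ⟨p, he, hne, hp⟩ := digon_mem hg hv1
  obtain ⟨p', he', hne', hp'⟩ := digon_mem hg' hv2
  have : p = p' := by
    by_contra h
    have := two_mult_le hc v (show p ≠ p' from h)
    omega
  rw [he, he', this]

lemma piece_unique (hconn : G.Connected) (hc : G.IsCubic) (hK4 : ¬ G.IsK4)
    {s t : Finset V} (hs : isPieceD G s ∨ isPieceT G s ∨ isPieceG G s)
    (ht : isPieceD G t ∨ isPieceT G t ∨ isPieceG G t) {v : V}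
    (hvs : v ∈ s) (hvt : v ∈ t) : s = t := by
  rcases hs with ⟨a, b, c, d, rfl, hd⟩ | hsT | ⟨u, w, rfl, hg⟩
  · rcases ht with ⟨a', b', c', d', rfl, hd'⟩ | ⟨htri, hpure⟩ | ⟨u', w', rfl, hg'⟩
    · exact DD hc hd hd' hvs hvt
    · exfalso
      have hdis := hpure a b c d hd
      rw [Finset.disjoint_left] at hdis
      exact hdis hvt hvs
    · exact (DG hc hd hg' hvs hvt).elim
  · rcases ht with ⟨a', b', c', d', rfl, hd'⟩ | htT | ⟨u', w', rfl, hg'⟩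
    · exfalso
      have hdis := hsT.2 a' b' c' d' hd'
      rw [Finset.disjoint_left] at hdis
      exact hdis hvs hvt
    · exact TT hconn hc hK4 hsT htT hvs hvt
    · exfalso
      obtain ⟨⟨x, y, z, rfl, htri⟩, -⟩ := hsT
      exact TG hc htri hg' hvs hvt
  · rcases ht with ⟨a', b', c', d', rfl, hd'⟩ | ⟨htri, hpure⟩ | ⟨u', w', rfl, hg'⟩
    · exact (DG hc hd' hg hvt hvs).elim
    · exfalso
      obtain ⟨x, y, z, rfl, htri'⟩ := htri
      exact TG hc htri' hg hvt hvs
    · exact GG hc hg hg' hvs hvt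

end Multigraph
namespace Multigraph
open Finset

variable {V : Type*} [Fintype V] [DecidableEq V] {G : Multigraph V}

lemma even_double_sum (G : Multigraph V) (s : Finset V) :
    2 ∣ ∑ u ∈ s, ∑ v ∈ s, G.mult u v := by
  rw [← ZMod.natCast_eq_zero_iff]
  push_cast
  rw [← Finset.sum_product']
  refine Finset.sum_involution (fun p _ => p.swap) ?_ ?_ ?_ ?_
  · intro p _
    simp only [Prod.fst_swap, Prod.snd_swap, G.symm p.2 p.1]
    exact CharTwo.add_self_eq_zero _
  · intro p _ hne heq
    apply hne
    have h1 : p.2 = p.1 := congrArg Prod.fst heq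
    rw [h1, G.loopless]
    simp
  · intro p hp
    simp only [Finset.mem_product] at hp ⊢
    exact ⟨hp.2, hp.1⟩
  · intro p _
    simp

lemma tri_sum {B : Finset V} (hdes : G.IsDesired B) {a b c : V} (ht : G.IsTriangle a b c) :
    ∑ u ∈ ({a, b, c} : Finset V), ∑ v ∈ ({a, b, c} : Finset V),
      (if (u ∈ B ↔ v ∈ B) then G.mult u v else 0) = 2 := by
  obtain ⟨-, db1, -, -, -⟩ := hdes
  have gs := G.symm
  have h1 := db1 a b c ht
  obtain ⟨hab, hac, hbc, m1, m2, m3⟩ := ht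
  rw [Finset.card_filter] at h1
  rw [sum3 _ (show ((a, b) : V × V) ≠ (a, c) by simp [hbc])
    (show ((a, b) : V × V) ≠ (b, c) by simp [hab])
    (show ((a, c) : V × V) ≠ (b, c) by simp [hab])] at h1
  rw [sum3 _ hab hac hbc, sum3 _ hab hac hbc, sum3 _ hab hac hbc, sum3 _ hab hac hbc]
  by_cases hA : a ∈ B <;> by_cases hB : b ∈ B <;> by_cases hC : c ∈ B <;>
    simp [hA, hB, hC, G.loopless, m1, m2, m3, gs b a, gs c a, gs c b] at h1 ⊢ <;>
    omega

lemma dia_sum {B : Finset V} (hdes : G.IsDesired B) {a b c d : V}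
    (hd : G.IsDiamond a b c d) :
    ∑ u ∈ ({a, b, c, d} : Finset V), ∑ v ∈ ({a, b, c, d} : Finset V),
      (if (u ∈ B ↔ v ∈ B) then G.mult u v else 0) = 2 := by
  obtain ⟨-, -, -, db3, -⟩ := hdes
  have gs := G.symm
  have h1 := db3 a b c d hd
  obtain ⟨hab, hac, had, hbc, hbd, hcd, m0, m1, m2, m3, m4, m5⟩ := hd
  rw [Finset.card_filter] at h1
  rw [sum5 _ (show ((a, b) : V × V) ≠ (a, c) by simp [hbc])
    (show ((a, b) : V × V) ≠ (b, c) by simp [hab])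
    (show ((a, b) : V × V) ≠ (b, d) by simp [hab])
    (show ((a, b) : V × V) ≠ (c, d) by simp [hac])
    (show ((a, c) : V × V) ≠ (b, c) by simp [hab])
    (show ((a, c) : V × V) ≠ (b, d) by simp [hab])
    (show ((a, c) : V × V) ≠ (c, d) by simp [hac])
    (show ((b, c) : V × V) ≠ (b, d) by simp [hcd])
    (show ((b, c) : V × V) ≠ (c, d) by simp [hbc])
    (show ((b, d) : V × V) ≠ (c, d) by simp [hbc])] at h1
  rw [sum4 _ hab hac had hbc hbd hcd, sum4 _ hab hac had hbc hbd hcd,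
    sum4 _ hab hac had hbc hbd hcd, sum4 _ hab hac had hbc hbd hcd,
    sum4 _ hab hac had hbc hbd hcd]
  by_cases hA : a ∈ B <;> by_cases hB : b ∈ B <;> by_cases hC : c ∈ B <;>
    by_cases hD : d ∈ B <;>
    simp [hA, hB, hC, hD, G.loopless, m0, m1, m2, m3, m4, m5,
      gs b a, gs c a, gs d a, gs c b, gs d b, gs d c] at h1 ⊢ <;>
    omega

lemma digon_sum {B : Finset V} (hdes : G.IsDesired B) {u w : V} (hg : G.IsDigon u w) :
    ∑ x ∈ ({u, w} : Finset V), ∑ v ∈ ({u, w} : Finset V),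
      (if (x ∈ B ↔ v ∈ B) then G.mult x v else 0) = 0 := by
  obtain ⟨-, -, -, -, db4⟩ := hdes
  have huw := hg.1
  have h1 : ¬(u ∈ B ↔ w ∈ B) := db4 u w hg.2
  have h2 : ¬(w ∈ B ↔ u ∈ B) := fun h => h1 h.symm
  rw [sum2 _ huw, sum2 _ huw, sum2 _ huw]
  simp [G.loopless, h1, h2]

end Multigraph


/-- For a desired bisection of a connected claw-free cubic multigraph `G`
(not `K₄`), `V(G)` partitions into diamonds, triangles, trumpets and digons, and the
number of monochromatic edges `ε` satisfies `3ε + k + 2p = |V(G)|` (i.e.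
`ε = k + (|V| - 4k - 2p)/3 = (|V| - k - 2p)/3`). -/
theorem stmt16 {V : Type*} [Fintype V] [DecidableEq V] (G : Multigraph V)
    (hconn : G.Connected) (hclaw : G.IsClawFree) (hcubic : G.IsCubic)
    (hK4 : ¬ G.IsK4) (B : Finset V) (hdes : G.IsDesired B) :
    (∃ P : Finset (Finset V),
      (∀ s ∈ P, ∀ t ∈ P, s ≠ t → Disjoint s t) ∧
      P.biUnion id = Finset.univ ∧
      (∀ s ∈ P, (∃ a b c d, s = {a, b, c, d} ∧ G.IsDiamond a b c d) ∨
        (∃ a b c, s = {a, b, c} ∧ G.IsTriangle a b c) ∨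
        (∃ a b c, s = {a, b, c} ∧ G.IsTrumpet a b c) ∨
        (∃ u v, s = {u, v} ∧ G.IsDigon u v))) ∧
    3 * G.epsilon B + G.diamondCount + 2 * G.digonCount = Fintype.card V := by
  classical
  open Finset Multigraph in
  set pred : Finset V → Prop :=
    fun s => isPieceD G s ∨ isPieceT G s ∨ isPieceG G s with hpreddef
  set P : Finset (Finset V) := univ.filter pred with hPdef
  have hmemP : ∀ s, s ∈ P ↔ pred s := by
    intro s; simp [hPdef]
  have hdisj : ∀ s ∈ P, ∀ t ∈ P, s ≠ t → Disjoint s t := by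
    intro s hs t ht hne
    rw [Finset.disjoint_left]
    intro v hvs hvt
    exact hne (piece_unique hconn hcubic hK4 ((hmemP s).mp hs) ((hmemP t).mp ht) hvs hvt)
  have hcov : P.biUnion id = Finset.univ := by
    ext v
    simp only [Finset.mem_biUnion, id, Finset.mem_univ, iff_true]
    obtain ⟨s, hs, hv⟩ := cover hconn hclaw hcubic hK4 hdes v
    exact ⟨s, (hmemP s).mpr hs, hv⟩
  -- the three sub-collections
  set Pd : Finset (Finset V) := univ.filter (isPieceD G) with hPd
  set Pt : Finset (Finset V) := univ.filter (isPieceT G) with hPt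
  set Pg : Finset (Finset V) := univ.filter (isPieceG G) with hPg
  have hcard4 : ∀ s, isPieceD G s → s.card = 4 := by
    rintro s ⟨a, b, c, d, rfl, hd⟩; exact diamond_card hd
  have hcard3 : ∀ s, isPieceT G s → s.card = 3 := by
    rintro s ⟨⟨a, b, c, rfl, ht⟩, -⟩; exact card3 ht.1 ht.2.1 ht.2.2.1
  have hcard2 : ∀ s, isPieceG G s → s.card = 2 := by
    rintro s ⟨u, v, rfl, hg⟩; exact card2 hg.1
  have hPsplit : P = (Pd ∪ Pt) ∪ Pg := by
    ext s
    simp only [hPdef, hPd, hPt, hPg, Finset.mem_filter, Finset.mem_union, Finset.mem_univ,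
      true_and, hpreddef]
    tauto
  have hd1 : Disjoint Pd Pt := by
    rw [Finset.disjoint_left]
    intro s hs ht
    rw [hPd, Finset.mem_filter] at hs
    rw [hPt, Finset.mem_filter] at ht
    have := hcard4 s hs.2
    have := hcard3 s ht.2
    omega
  have hd2 : Disjoint (Pd ∪ Pt) Pg := by
    rw [Finset.disjoint_left]
    intro s hs hg
    rw [hPg, Finset.mem_filter] at hg
    have h2 := hcard2 s hg.2
    rw [Finset.mem_union, hPd, hPt, Finset.mem_filter, Finset.mem_filter] at hs
    rcases hs with hs | hs
    · have := hcard4 s hs.2; omega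
    · have := hcard3 s hs.2; omega
  -- vertex count
  have hV : Fintype.card V = 4 * Pd.card + 3 * Pt.card + 2 * Pg.card := by
    have h1 : Fintype.card V = ∑ s ∈ P, s.card := by
      rw [← Finset.card_univ, ← hcov]
      exact Finset.card_biUnion hdisj
    have h2 : ∑ s ∈ Pd, s.card = 4 * Pd.card := by
      rw [Finset.sum_congr rfl (fun s hs => hcard4 s (Finset.mem_filter.mp (hPd ▸ hs)).2),
        Finset.sum_const, smul_eq_mul, mul_comm]
    have h3 : ∑ s ∈ Pt, s.card = 3 * Pt.card := by
      rw [Finset.sum_congr rfl (fun s hs => hcard3 s (Finset.mem_filter.mp (hPt ▸ hs)).2),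
        Finset.sum_const, smul_eq_mul, mul_comm]
    have h4 : ∑ s ∈ Pg, s.card = 2 * Pg.card := by
      rw [Finset.sum_congr rfl (fun s hs => hcard2 s (Finset.mem_filter.mp (hPg ▸ hs)).2),
        Finset.sum_const, smul_eq_mul, mul_comm]
    rw [h1, hPsplit, Finset.sum_union hd2, Finset.sum_union hd1, h2, h3, h4]
  -- counts of diamonds and digons
  have hk : G.diamondCount = Pd.card := by
    unfold diamondCount
    have h : G.diamondSets = ↑Pd := by
      ext s
      simp [diamondSets, hPd, isPieceD]
    rw [h, Set.ncard_coe_finset]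
  have hp : G.digonCount = Pg.card := by
    unfold digonCount
    have h : G.digonSets = ↑Pg := by
      ext s
      simp only [digonSets, Set.mem_setOf_eq, hPg, Finset.coe_filter, Finset.mem_univ,
        true_and, isPieceG]
      constructor
      · rintro ⟨u, v, rfl, hg, -⟩; exact ⟨u, v, rfl, hg⟩
      · rintro ⟨u, v, rfl, hg⟩
        exact ⟨u, v, rfl, hg, fun w => no_trumpet hcubic hdes u v w⟩
    rw [h, Set.ncard_coe_finset]
  refine ⟨⟨P, hdisj, hcov, ?_⟩, ?_⟩
  · intro s hs
    rcases (hmemP s).mp hs with h | h | h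
    · exact Or.inl h
    · exact Or.inr (Or.inl h.1)
    · exact Or.inr (Or.inr (Or.inr h))
  -- the count of monochromatic edges
  set F : V → V → ℕ := fun u v => if (u ∈ B ↔ v ∈ B) then G.mult u v else 0 with hF
  set Sb : ℕ := ∑ u ∈ B, ∑ v ∈ B, G.mult u v with hSb
  set Sc : ℕ := ∑ u ∈ Bᶜ, ∑ v ∈ Bᶜ, G.mult u v with hSc
  have hev1 : 2 ∣ Sb := even_double_sum G B
  have hev2 : 2 ∣ Sc := even_double_sum G Bᶜ
  have hSbF : ∑ u ∈ B, ∑ v ∈ B, F u v = Sb := by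
    refine Finset.sum_congr rfl (fun u hu => Finset.sum_congr rfl (fun v hv => ?_))
    rw [hF]; exact if_pos (iff_of_true hu hv)
  have hScF : ∑ u ∈ Bᶜ, ∑ v ∈ Bᶜ, F u v = Sc := by
    refine Finset.sum_congr rfl (fun u hu => Finset.sum_congr rfl (fun v hv => ?_))
    rw [hF]
    exact if_pos (iff_of_false (Finset.mem_compl.mp hu) (Finset.mem_compl.mp hv))
  have hcr1 : ∑ u ∈ B, ∑ v ∈ Bᶜ, F u v = 0 := by
    refine Finset.sum_eq_zero (fun u hu => Finset.sum_eq_zero (fun v hv => ?_))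
    rw [hF]
    exact if_neg (fun h => (Finset.mem_compl.mp hv) (h.mp hu))
  have hcr2 : ∑ u ∈ Bᶜ, ∑ v ∈ B, F u v = 0 := by
    refine Finset.sum_eq_zero (fun u hu => Finset.sum_eq_zero (fun v hv => ?_))
    rw [hF]
    exact if_neg (fun h => (Finset.mem_compl.mp hu) (h.mpr hv))
  have hsplitS : ∑ u, ∑ v, F u v = Sb + Sc := by
    have e2 : ∑ u, ∑ v, F u v = ∑ u, (∑ v ∈ B, F u v + ∑ v ∈ Bᶜ, F u v) :=
      Finset.sum_congr rfl (fun u _ => (Finset.sum_add_sum_compl B _).symm)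
    rw [e2, Finset.sum_add_distrib,
      ← Finset.sum_add_sum_compl B (fun u => ∑ v ∈ B, F u v),
      ← Finset.sum_add_sum_compl B (fun u => ∑ v ∈ Bᶜ, F u v),
      hSbF, hScF, hcr1, hcr2]
    omega
  -- re-express via pieces
  set Q : Finset (V × V) := P.biUnion (fun s => s ×ˢ s) with hQ
  have hzero : ∀ p ∈ (Finset.univ : Finset (V × V)), p ∉ Q → F p.1 p.2 = 0 := by
    intro p _ hpQ
    by_contra hne
    simp only [hF] at hne
    by_cases hcond : (p.1 ∈ B ↔ p.2 ∈ B)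
    case neg => rw [if_neg hcond] at hne; exact hne rfl
    rw [if_pos hcond] at hne
    have hm : G.mult p.1 p.2 ≠ 0 := hne
    have hne12 : p.1 ≠ p.2 := by
      intro h
      rw [h, G.loopless] at hm
      exact hm rfl
    obtain ⟨w, htw⟩ := (hdes.2.2.1) p.1 p.2 ⟨hne12, Nat.pos_of_ne_zero hm⟩ hcond
    obtain ⟨s, hsDT, h1, h2, -⟩ := triangle_piece hconn hcubic hK4 htw
    apply hpQ
    rw [hQ, Finset.mem_biUnion]
    refine ⟨s, (hmemP s).mpr (hsDT.elim Or.inl (fun h => Or.inr (Or.inl h))), ?_⟩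
    exact Finset.mem_product.mpr ⟨h1, h2⟩
  have hprodd : (Finset.univ : Finset (Finset V)) = univ := rfl
  have hStoQ : ∑ u, ∑ v, F u v = ∑ p ∈ Q, F p.1 p.2 := by
    rw [← Finset.sum_product']
    rw [Finset.univ_product_univ]
    exact (Finset.sum_subset (Finset.subset_univ Q) hzero).symm
  have hpd : (↑P : Set (Finset V)).PairwiseDisjoint (fun s => s ×ˢ s) := by
    intro x hx y hy hne
    have hdxy := hdisj x (by exact_mod_cast hx) y (by exact_mod_cast hy) hne
    simp only [Function.onFun]
    rw [Finset.disjoint_left] at hdxy ⊢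
    intro p hpx hpy
    rw [Finset.mem_product] at hpx hpy
    exact hdxy hpx.1 hpy.1
  have hQsum : ∑ p ∈ Q, F p.1 p.2 = ∑ s ∈ P, ∑ p ∈ s ×ˢ s, F p.1 p.2 := by
    rw [hQ, Finset.sum_biUnion hpd]
  have hperD : ∀ s ∈ Pd, ∑ p ∈ s ×ˢ s, F p.1 p.2 = 2 := by
    intro s hs
    obtain ⟨a, b, c, d, rfl, hd⟩ := (Finset.mem_filter.mp (hPd ▸ hs)).2
    rw [Finset.sum_product']
    exact dia_sum hdes hd
  have hperT : ∀ s ∈ Pt, ∑ p ∈ s ×ˢ s, F p.1 p.2 = 2 := by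
    intro s hs
    obtain ⟨⟨a, b, c, rfl, ht⟩, -⟩ := (Finset.mem_filter.mp (hPt ▸ hs)).2
    rw [Finset.sum_product']
    exact tri_sum hdes ht
  have hperG : ∀ s ∈ Pg, ∑ p ∈ s ×ˢ s, F p.1 p.2 = 0 := by
    intro s hs
    obtain ⟨u, v, rfl, hg⟩ := (Finset.mem_filter.mp (hPg ▸ hs)).2
    rw [Finset.sum_product']
    exact digon_sum hdes hg
  have htotal : Sb + Sc = 2 * (Pd.card + Pt.card) := by
    rw [← hsplitS, hStoQ, hQsum, hPsplit, Finset.sum_union hd2, Finset.sum_union hd1,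
      Finset.sum_congr rfl hperD, Finset.sum_congr rfl hperT, Finset.sum_congr rfl hperG,
      Finset.sum_const, Finset.sum_const, Finset.sum_const]
    simp only [smul_eq_mul]
    omega
  have hepsdef : G.epsilon B = Sb / 2 + Sc / 2 := rfl
  rw [hepsdef, hk, hp, hV]
  omega
end

section
/- Let G be a connected claw-free cubic multigraph different from K4, with k diamonds and p digons, where k is odd. Then no 2-bisection of G has exactly (|V(G)| - k - 2p)/3 monochromatic edges, since |V(G)| is even and (|V(G)| - k - 2p)/3 would be odd while the number of monochromatic edges of any 2-bisection is even. -/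
lemma even_double_sum' {V : Type*} [DecidableEq V] (f : V → V → ℕ)
    (hsymm : ∀ u v, f u v = f v u) (h0 : ∀ v, f v v = 0) (s : Finset V) :
    Even (∑ u ∈ s, ∑ v ∈ s, f u v) := by
  classical
  induction s using Finset.induction_on with
  | empty => simp
  | @insert a s ha ih =>
    rw [Finset.sum_insert ha]
    have hrow : ∀ u ∈ s, ∑ v ∈ insert a s, f u v = f u a + ∑ v ∈ s, f u v := by
      intro u _; rw [Finset.sum_insert ha]
    rw [Finset.sum_congr rfl hrow, Finset.sum_insert ha, h0, Finset.sum_add_distrib]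
    have : ∑ u ∈ s, f u a = ∑ v ∈ s, f a v := by
      apply Finset.sum_congr rfl; intro u _; rw [hsymm]
    rw [this]
    obtain ⟨m, hm⟩ := ih
    exact ⟨∑ v ∈ s, f a v + m, by omega⟩

/-- If the number `k` of diamonds is odd, no 2-bisection has exactly
`(|V| - k - 2p)/3` monochromatic edges. -/
theorem stmt19 {V : Type*} [Fintype V] [DecidableEq V] (G : Multigraph V)
    (hconn : G.Connected) (hclaw : G.IsClawFree) (hcubic : G.IsCubic)
    (hK4 : ¬ G.IsK4) (hodd : Odd G.diamondCount) :
    ¬ ∃ B : Finset V, G.IsKBisection B 2 ∧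
      3 * G.epsilon B + G.diamondCount + 2 * G.digonCount = Fintype.card V := by
  rintro ⟨B, ⟨hbis, -, -⟩, heq⟩
  classical
  set SB := ∑ u ∈ B, ∑ v ∈ B, G.mult u v with hSB
  set SC := ∑ u ∈ Bᶜ, ∑ v ∈ Bᶜ, G.mult u v with hSC
  have hESB : Even SB := even_double_sum' G.mult G.symm G.loopless B
  have hESC : Even SC := even_double_sum' G.mult G.symm G.loopless Bᶜ
  have hEStot : Even (∑ u, ∑ v, G.mult u v) :=
    even_double_sum' G.mult G.symm G.loopless Finset.univ
  have htot : 3 * Fintype.card V = ∑ u, ∑ v, G.mult u v := by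
    calc 3 * Fintype.card V = ∑ _u : V, 3 := by
          simp [Finset.sum_const, mul_comm]
      _ = ∑ u, G.degree u := by
          exact Finset.sum_congr rfl fun u _ => (hcubic u).symm
      _ = ∑ u, ∑ v, G.mult u v := rfl
  have hsplit : ∀ s : Finset V,
      3 * s.card = (∑ u ∈ s, ∑ v ∈ s, G.mult u v) + ∑ u ∈ s, ∑ v ∈ sᶜ, G.mult u v := by
    intro s
    calc 3 * s.card = ∑ u ∈ s, G.degree u := by
          rw [Finset.sum_congr rfl fun u _ => hcubic u]
          simp [Finset.sum_const, mul_comm]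
      _ = ∑ u ∈ s, (∑ v ∈ s, G.mult u v + ∑ v ∈ sᶜ, G.mult u v) := by
          refine Finset.sum_congr rfl fun u _ => ?_
          rw [Finset.sum_add_sum_compl]
          rfl
      _ = _ := Finset.sum_add_distrib
  have hXY : ∑ u ∈ B, ∑ v ∈ Bᶜ, G.mult u v = ∑ u ∈ Bᶜ, ∑ v ∈ B, G.mult u v := by
    rw [Finset.sum_comm]
    exact Finset.sum_congr rfl fun u _ => Finset.sum_congr rfl fun v _ => G.symm _ _
  have hB := hsplit B
  have hC := hsplit Bᶜ
  rw [compl_compl] at hC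
  have hbis' : B.card = Bᶜ.card := hbis
  have hSBC : SB = SC := by omega
  have heq' : 3 * (SB / 2 + SC / 2) + G.diamondCount + 2 * G.digonCount
      = Fintype.card V := heq
  obtain ⟨m, hm⟩ := hESB
  obtain ⟨n, hn⟩ := hEStot
  obtain ⟨r, hr⟩ := hodd
  omega
end
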